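/- arXiv:2302.03672 — 11 statements merged into one kernel-verified Lean document; each statement's English description precedes it below -/
import Mathlib

section
/- For every ABB instance and every satisfaction function μ, there exists an outcome W (i.e., a set W ⊆ P with c(W) ≤ b) that satisfies EJR with respect to μ. -/
open Finset

namespace ABB

variable {V P : Type} [Fintype V] [DecidableEq V] [Fintype P] [DecidableEq P]

/-- Total cost of a set of projects. -/
def costOf (c : P → ℝ) (S : Finset P) : ℝ := ∑ p ∈ S, c p

/-- `μ` is an (approval-based) satisfaction function: monotone w.r.t. inclusion,
nonnegative, and zero exactly on the empty set. -/
def IsSatFun (μ : Finset P → ℝ) : Prop :=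
  (∀ S T : Finset P, S ⊆ T → μ S ≤ μ T) ∧
  (∀ S : Finset P, μ S = 0 ↔ S = ∅) ∧
  (∀ S : Finset P, 0 ≤ μ S)

/-- `μ` is strictly increasing. -/
def StrictlyIncreasing (μ : Finset P → ℝ) : Prop :=
  ∀ S T : Finset P, S ⊂ T → μ S < μ T

/-- `μ` is cost-neutral: sets related by a cost-preserving bijection get equal satisfaction. -/
def CostNeutral (c : P → ℝ) (μ : Finset P → ℝ) : Prop :=
  ∀ S T : Finset P,
    (∃ f : {p // p ∈ S} → {p // p ∈ T},
        Function.Bijective f ∧ ∀ p : {p // p ∈ S}, c p.val = c (f p).val) →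
    μ S = μ T

/-- `μ` is additive. -/
def Additive (μ : Finset P → ℝ) : Prop :=
  ∀ S : Finset P, μ S = ∑ p ∈ S, μ {p}

/-- `μ` is strictly cost-responsive. -/
def StrictlyCostResponsive (c : P → ℝ) (μ : Finset P → ℝ) : Prop :=
  ∀ S T : Finset P, costOf c S < costOf c T → μ S < μ T

/-- The instance is a unit-cost instance. -/
def UnitCost (c : P → ℝ) : Prop := ∀ p : P, c p = 1

/-- `μ` has weakly decreasing normalized satisfaction (DNS): it is additive, and for
projects `p, p'` with `c p ≤ c p'` we have `μ {p} ≤ μ {p'}` and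
`μ {p} / c p ≥ μ {p'} / c p'`. -/
def DNS (c : P → ℝ) (μ : Finset P → ℝ) : Prop :=
  Additive μ ∧
  ∀ p p' : P, c p ≤ c p' → μ {p} ≤ μ {p'} ∧ μ {p'} / c p' ≤ μ {p} / c p

/-- A (nonempty) group `N'` of voters is `T`-cohesive. -/
def Cohesive (A : V → Finset P) (c : P → ℝ) (b : ℝ)
    (N' : Finset V) (T : Finset P) : Prop :=
  N'.Nonempty ∧ (∀ i ∈ N', T ⊆ A i) ∧
    costOf c T ≤ ((N'.card : ℝ) / (Fintype.card V : ℝ)) * b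

/-- Extended justified representation w.r.t. `μ`. -/
def EJR (A : V → Finset P) (c : P → ℝ) (b : ℝ) (μ : Finset P → ℝ) (W : Finset P) : Prop :=
  ∀ (N' : Finset V) (T : Finset P), Cohesive A c b N' T →
    ∃ i ∈ N', μ T ≤ μ (A i ∩ W)

/-- EJR up to one project w.r.t. `μ`. -/
def EJR1 (A : V → Finset P) (c : P → ℝ) (b : ℝ) (μ : Finset P → ℝ) (W : Finset P) : Prop :=
  ∀ (N' : Finset V) (T : Finset P), Cohesive A c b N' T →
    T ⊆ W ∨ ∃ i ∈ N', ∃ p ∉ W, μ T < μ (A i ∩ insert p W)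

/-- EJR up to any project w.r.t. `μ`. -/
def EJRx (A : V → Finset P) (c : P → ℝ) (b : ℝ) (μ : Finset P → ℝ) (W : Finset P) : Prop :=
  ∀ (N' : Finset V) (T : Finset P), Cohesive A c b N' T →
    ∃ i ∈ N', ∀ p ∈ T \ W, μ T < μ (A i ∩ insert p W)

/-- `μ`-EJR-1⁺: like EJR-1, but the additional project must come from `T`. -/
def EJR1plus (A : V → Finset P) (c : P → ℝ) (b : ℝ) (μ : Finset P → ℝ) (W : Finset P) : Prop :=
  ∀ (N' : Finset V) (T : Finset P), Cohesive A c b N' T →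
    T ⊆ W ∨ ∃ i ∈ N', ∃ p ∈ T \ W, μ T < μ (A i ∩ insert p W)

/-- Proportional justified representation w.r.t. `μ`. -/
def PJR (A : V → Finset P) (c : P → ℝ) (b : ℝ) (μ : Finset P → ℝ) (W : Finset P) : Prop :=
  ∀ (N' : Finset V) (T : Finset P), Cohesive A c b N' T →
    μ T ≤ μ (W ∩ N'.biUnion A)

/-- PJR up to any project w.r.t. `μ`. -/
def PJRx (A : V → Finset P) (c : P → ℝ) (b : ℝ) (μ : Finset P → ℝ) (W : Finset P) : Prop :=
  ∀ (N' : Finset V) (T : Finset P), Cohesive A c b N' T →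
    ∀ p ∈ T \ W, μ T < μ (insert p (W ∩ N'.biUnion A))

/-- `μ`-Local-BPJR. -/
def LocalBPJR (A : V → Finset P) (c : P → ℝ) (b : ℝ) (μ : Finset P → ℝ) (W : Finset P) : Prop :=
  ¬ ∃ (N' : Finset V) (T Wstar : Finset P),
      Cohesive A c b N' T ∧
      N'.biUnion A ∩ W ⊂ Wstar ∧
      (∀ i ∈ N', Wstar ⊆ A i) ∧
      costOf c Wstar ≤ costOf c T ∧
      (∀ W' : Finset P, (∀ i ∈ N', W' ⊆ A i) → costOf c W' ≤ costOf c T → μ W' ≤ μ Wstar)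

/-- The set of approvers of a project. -/
def approvers (A : V → Finset P) (p : P) : Finset V :=
  Finset.univ.filter (fun i => p ∈ A i)

/-- `p` is `ρ`-affordable given per-voter remaining budgets `bud`. -/
def Affordable (A : V → Finset P) (c : P → ℝ) (μ : Finset P → ℝ)
    (bud : V → ℝ) (p : P) (ρ : ℝ) : Prop :=
  ∑ i ∈ approvers A p, min (bud i) (ρ * μ {p}) = c p

/-- The states (selected set, remaining budgets) reachable by the Method of Equal Shares,
starting from initial per-voter budget `b0`. -/
inductive MESReach (A : V → Finset P) (c : P → ℝ) (μ : Finset P → ℝ) (b0 : ℝ) :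
    Finset P → (V → ℝ) → Prop
  | init : MESReach A c μ b0 ∅ (fun _ => b0)
  | step {W : Finset P} {bud : V → ℝ} {p : P} {ρ : ℝ} :
      MESReach A c μ b0 W bud →
      p ∉ W → 0 ≤ ρ →
      Affordable A c μ bud p ρ →
      (∀ p' ∉ W, ∀ ρ' : ℝ, 0 ≤ ρ' → Affordable A c μ bud p' ρ' → ρ ≤ ρ') →
      MESReach A c μ b0 (insert p W)
        (fun i => if p ∈ A i then bud i - min (bud i) (ρ * μ {p}) else bud i)

/-- `W` is an output of MES[μ]: it is reachable and no further project is affordable. -/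
def MESOutput (A : V → Finset P) (c : P → ℝ) (b : ℝ) (μ : Finset P → ℝ) (W : Finset P) : Prop :=
  ∃ bud : V → ℝ,
    MESReach A c μ (b / (Fintype.card V : ℝ)) W bud ∧
    ∀ p ∉ W, ∀ ρ : ℝ, 0 ≤ ρ → ¬ Affordable A c μ bud p ρ

/-- `(B, d)` is a price system for `W` (conditions C1–C5). -/
def PriceSystem (A : V → Finset P) (c : P → ℝ) (W : Finset P)
    (B : ℝ) (d : V → P → ℝ) : Prop :=
  0 < B ∧
  (∀ (i : V) (p : P), 0 ≤ d i p ∧ d i p ≤ B / (Fintype.card V : ℝ)) ∧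
  (∀ (i : V) (p : P), 0 < d i p → p ∈ A i) ∧
  (∀ (i : V) (p : P), 0 < d i p → p ∈ W) ∧
  (∀ i : V, ∑ p : P, d i p ≤ B / (Fintype.card V : ℝ)) ∧
  (∀ p ∈ W, ∑ i : V, d i p = c p) ∧
  (∀ p ∉ W, ∑ i ∈ approvers A p, (B / (Fintype.card V : ℝ) - ∑ p' : P, d i p') ≤ c p)

/-- Condition C6 for a payment function `d`. -/
def C6 (A : V → Finset P) (c : P → ℝ) (W : Finset P) (d : V → P → ℝ) : Prop :=
  ∀ p ∉ W, ∀ p' ∈ W, ∑ i ∈ approvers A p, d i p' ≤ c p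

/-- Unselected projects with at least one approver. -/
def phragCandidates (A : V → Finset P) (W : Finset P) : Finset P :=
  Finset.univ.filter (fun p => p ∉ W ∧ (approvers A p).Nonempty)

/-- Sequential Phragmén's value `t(p)` given loads `l`. -/
noncomputable def phragLoad (A : V → Finset P) (c : P → ℝ) (l : V → ℝ) (p : P) : ℝ :=
  (c p + ∑ i ∈ approvers A p, l i) / ((approvers A p).card : ℝ)

/-- The states (selected set, loads) reachable by sequential Phragmén. -/
inductive PhragReach (A : V → Finset P) (c : P → ℝ) (b : ℝ) :
    Finset P → (V → ℝ) → Prop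
  | init : PhragReach A c b ∅ (fun _ => 0)
  | step {W : Finset P} {l : V → ℝ} {p : P} :
      PhragReach A c b W l →
      p ∈ phragCandidates A W →
      (∀ p' ∈ phragCandidates A W, phragLoad A c l p ≤ phragLoad A c l p') →
      (∀ p' ∈ phragCandidates A W,
        (∀ p'' ∈ phragCandidates A W, phragLoad A c l p' ≤ phragLoad A c l p'') →
        costOf c W + c p' ≤ b) →
      PhragReach A c b (insert p W)
        (fun i => if p ∈ A i then phragLoad A c l p else l i)

/-- `W` is an output of sequential Phragmén: it is reachable and the rule terminates at `W`
(either no candidate is left, or some minimizer of `t` would exceed the budget). -/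
def PhragOutput (A : V → Finset P) (c : P → ℝ) (b : ℝ) (W : Finset P) : Prop :=
  ∃ l : V → ℝ, PhragReach A c b W l ∧
    (phragCandidates A W = ∅ ∨
      ∃ p ∈ phragCandidates A W,
        (∀ p' ∈ phragCandidates A W, phragLoad A c l p ≤ phragLoad A c l p') ∧
        b < costOf c W + c p)

end ABB
/-- For every ABB instance and satisfaction function `μ`, there is an
outcome satisfying EJR w.r.t. `μ`. -/
theorem statement2 {V P : Type} [Fintype V] [DecidableEq V] [Fintype P] [DecidableEq P]
    (A : V → Finset P) (c : P → ℝ) (b : ℝ)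
    (hn : 0 < Fintype.card V) (hc : ∀ p : P, 0 < c p) (hb : 0 < b)
    (μ : Finset P → ℝ) (hμ : ABB.IsSatFun μ) :
    ∃ W : Finset P, ABB.costOf c W ≤ b ∧ ABB.EJR A c b μ W := by
  classical
  have hμmono := hμ.1
  have hμnonneg := hμ.2.2
  set n : ℝ := (Fintype.card V : ℝ) with hndef
  have hnpos : (0 : ℝ) < n := by rw [hndef]; exact_mod_cast hn
  have key : ∀ R : Finset V, ∃ W : Finset P,
      ABB.costOf c W ≤ ((R.card : ℝ) / n) * b ∧
      ∀ (N' : Finset V) (T : Finset P), N' ⊆ R → ABB.Cohesive A c b N' T →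
        ∃ i ∈ N', μ T ≤ μ (A i ∩ W) := by
    intro R
    induction R using Finset.strongInduction with
    | _ R IH =>
      rcases R.eq_empty_or_nonempty with rfl | hR
      · refine ⟨∅, ?_, ?_⟩
        · simp [ABB.costOf]
        · intro N' T hsub hcoh
          exact absurd hcoh.1 (by simp [Finset.subset_empty.mp hsub])
      · -- candidate cohesive pairs inside R
        set cand : Finset (Finset V × Finset P) :=
          Finset.univ.filter (fun q => q.1 ⊆ R ∧ ABB.Cohesive A c b q.1 q.2) with hcanddef
        have hmem : ∀ q : Finset V × Finset P,
            q ∈ cand ↔ q.1 ⊆ R ∧ ABB.Cohesive A c b q.1 q.2 := by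
          intro q; simp [hcanddef]
        have hcand : cand.Nonempty := by
          refine ⟨(R, ∅), (hmem _).mpr ⟨subset_rfl, hR, fun i _ => Finset.empty_subset _, ?_⟩⟩
          have h0 : ABB.costOf c (∅ : Finset P) = 0 := by simp [ABB.costOf]
          rw [h0]
          have : (0:ℝ) ≤ (R.card : ℝ) / (Fintype.card V : ℝ) := by positivity
          exact mul_nonneg this hb.le
        obtain ⟨q, hq, hqmax⟩ := Finset.exists_max_image cand (fun q => μ q.2) hcand
        obtain ⟨hN0sub, hcoh0⟩ := (hmem q).mp hq
        have hN0ne : q.1.Nonempty := hcoh0.1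
        have hss : R \ q.1 ⊂ R := Finset.sdiff_ssubset hN0sub hN0ne
        obtain ⟨W', hW'cost, hW'ejr⟩ := IH _ hss
        refine ⟨q.2 ∪ W', ?_, ?_⟩
        · have h1 : ABB.costOf c (q.2 ∪ W') ≤ ABB.costOf c q.2 + ABB.costOf c W' := by
            unfold ABB.costOf
            have h2 := Finset.sum_union_inter (s₁ := q.2) (s₂ := W') (f := c)
            have h3 : (0:ℝ) ≤ ∑ p ∈ q.2 ∩ W', c p :=
              Finset.sum_nonneg fun p _ => (hc p).le
            linarith
          have hcard : ((R \ q.1).card : ℝ) = (R.card : ℝ) - (q.1.card : ℝ) := by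
            rw [Finset.card_sdiff_of_subset hN0sub, Nat.cast_sub (Finset.card_le_card hN0sub)]
          have hT0 : ABB.costOf c q.2 ≤ ((q.1.card : ℝ) / n) * b := hcoh0.2.2
          have hring : ((q.1.card : ℝ) / n) * b + (((R.card : ℝ) - (q.1.card : ℝ)) / n) * b
              = ((R.card : ℝ) / n) * b := by ring
          rw [hcard] at hW'cost
          linarith
        · intro N' T hsub hcoh
          by_cases hmeet : (N' ∩ q.1).Nonempty
          · obtain ⟨i, hi⟩ := hmeet
            rw [Finset.mem_inter] at hi
            refine ⟨i, hi.1, ?_⟩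
            have hTq : μ T ≤ μ q.2 := hqmax (N', T) ((hmem _).mpr ⟨hsub, hcoh⟩)
            have hsub2 : q.2 ⊆ A i ∩ (q.2 ∪ W') :=
              Finset.subset_inter (hcoh0.2.1 i hi.2) Finset.subset_union_left
            exact hTq.trans (hμmono _ _ hsub2)
          · have hsub' : N' ⊆ R \ q.1 := fun x hx =>
              Finset.mem_sdiff.mpr ⟨hsub hx,
                fun hx' => hmeet ⟨x, Finset.mem_inter.mpr ⟨hx, hx'⟩⟩⟩
            obtain ⟨i, hi, hμi⟩ := hW'ejr N' T hsub' hcoh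
            refine ⟨i, hi, hμi.trans (hμmono _ _ ?_)⟩
            exact Finset.inter_subset_inter le_rfl Finset.subset_union_right
  obtain ⟨W, hWcost, hWejr⟩ := key Finset.univ
  refine ⟨W, ?_, fun N' T hcoh => hWejr N' T (Finset.subset_univ _) hcoh⟩
  rw [Finset.card_univ] at hWcost
  rw [div_self (ne_of_gt hnpos), one_mul] at hWcost
  exact hWcost
end

section
/- Consider an ABB instance with exactly one voter who approves every project in P, and let μ be a satisfaction function that is strictly cost-responsive. If there exists a set T ⊆ P with c(T) = b, then every outcome W that satisfies EJR with respect to μ has c(W) = b. -/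
open Finset

/-- In an ABB instance with exactly one voter who approves all projects,
for a strictly cost-responsive satisfaction function `μ`: if some `T ⊆ P` has cost exactly
`b`, then every outcome satisfying EJR w.r.t. `μ` has cost exactly `b`. -/
theorem statement3 {V P : Type} [Fintype V] [DecidableEq V] [Fintype P] [DecidableEq P]
    (A : V → Finset P) (c : P → ℝ) (b : ℝ)
    (hc : ∀ p : P, 0 < c p) (hb : 0 < b)
    (hone : Fintype.card V = 1) (hall : ∀ i : V, A i = Finset.univ)
    (μ : Finset P → ℝ) (hμ : ABB.IsSatFun μ)
    (hscr : ABB.StrictlyCostResponsive c μ)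
    (hT : ∃ T : Finset P, ABB.costOf c T = b) :
    ∀ W : Finset P, ABB.costOf c W ≤ b → ABB.EJR A c b μ W → ABB.costOf c W = b := by
  intro W hWb hEJR
  obtain ⟨T, hTb⟩ := hT
  have hne : (Finset.univ : Finset V).Nonempty := by
    rw [← Finset.card_pos, Finset.card_univ, hone]; norm_num
  have hcoh : ABB.Cohesive A c b (Finset.univ : Finset V) T := by
    refine ⟨hne, fun i _ => by rw [hall i]; exact Finset.subset_univ _, ?_⟩
    rw [Finset.card_univ, hone, hTb]
    norm_num
  obtain ⟨i, _, hi⟩ := hEJR Finset.univ T hcoh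
  have hAW : A i ∩ W = W := by rw [hall i]; exact Finset.univ_inter W
  rw [hAW] at hi
  by_contra hne'
  have hlt : ABB.costOf c W < ABB.costOf c T := by
    rw [hTb]; exact lt_of_le_of_ne hWb hne'
  exact absurd hi (not_le.mpr (hscr W T hlt))
end

section
/- Consider a unit-cost ABB instance and a satisfaction function μ that is cost-neutral and strictly increasing. Then for every outcome W: W satisfies EJR-1 with respect to μ if and only if W satisfies EJR with respect to μ, and W satisfies EJR-x with respect to μ if and only if W satisfies EJR with respect to μ. -/
open Finset

/-- In a unit-cost ABB instance, for a cost-neutral and strictly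
increasing satisfaction function `μ`, both EJR-1 and EJR-x are equivalent to EJR. -/
theorem statement5 {V P : Type} [Fintype V] [DecidableEq V] [Fintype P] [DecidableEq P]
    (A : V → Finset P) (c : P → ℝ) (b : ℝ)
    (hn : 0 < Fintype.card V) (hc : ∀ p : P, 0 < c p) (hb : 0 < b)
    (hunit : ABB.UnitCost c)
    (μ : Finset P → ℝ) (hμ : ABB.IsSatFun μ)
    (hcn : ABB.CostNeutral c μ) (hsi : ABB.StrictlyIncreasing μ)
    (W : Finset P) (hW : ABB.costOf c W ≤ b) :
    (ABB.EJR1 A c b μ W ↔ ABB.EJR A c b μ W) ∧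
    (ABB.EJRx A c b μ W ↔ ABB.EJR A c b μ W) := by
  -- μ depends only on cardinality
  have hcard : ∀ S T : Finset P, S.card = T.card → μ S = μ T := by
    intro S T h
    apply hcn
    have : Fintype.card {p // p ∈ S} = Fintype.card {p // p ∈ T} := by
      simpa [Fintype.card_coe] using h
    obtain ⟨e⟩ := Fintype.card_eq.mp this
    exact ⟨e, e.bijective, fun p => by rw [hunit, hunit]⟩
  have hle : ∀ S T : Finset P, S.card ≤ T.card → μ S ≤ μ T := by
    intro S T h
    obtain ⟨T', hT'sub, hT'card⟩ := Finset.exists_subset_card_eq h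
    rw [hcard S T' hT'card.symm]
    exact hμ.1 _ _ hT'sub
  -- from EJR, strict bound for inserting an approved new project
  have step : ∀ (i : V) (T : Finset P), T ⊆ A i → μ T ≤ μ (A i ∩ W) →
      ∀ p, p ∈ A i → p ∉ W → μ T < μ (A i ∩ insert p W) := by
    intro i T hTA hTW p hpA hpW
    refine lt_of_le_of_lt hTW (hsi _ _ ?_)
    refine Finset.ssubset_iff_of_subset (Finset.inter_subset_inter (subset_refl _)
      (Finset.subset_insert _ _)) |>.mpr ⟨p, ?_, ?_⟩
    · exact Finset.mem_inter.mpr ⟨hpA, Finset.mem_insert_self _ _⟩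
    · intro hmem
      exact hpW (Finset.mem_inter.mp hmem).2
  -- card argument: if μ T < μ (A i ∩ insert p W) then μ T ≤ μ (A i ∩ W)
  have key : ∀ (i : V) (T : Finset P) (p : P), μ T < μ (A i ∩ insert p W) →
      μ T ≤ μ (A i ∩ W) := by
    intro i T p hlt
    apply hle
    by_contra hcontra
    push_neg at hcontra
    have h1 : (A i ∩ insert p W).card ≤ (A i ∩ W).card + 1 := by
      calc (A i ∩ insert p W).card ≤ (insert p (A i ∩ W)).card :=
            Finset.card_le_card (by
              intro x hx
              rcases Finset.mem_inter.mp hx with ⟨hxA, hxW⟩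
              rcases Finset.mem_insert.mp hxW with h | h
              · exact Finset.mem_insert.mpr (Or.inl h)
              · exact Finset.mem_insert.mpr (Or.inr (Finset.mem_inter.mpr ⟨hxA, h⟩)))
        _ ≤ (A i ∩ W).card + 1 := Finset.card_insert_le _ _
    have : (A i ∩ insert p W).card ≤ T.card := by omega
    exact absurd (hle _ _ this) (not_le.mpr hlt)
  constructor
  · constructor
    · -- EJR1 → EJR
      intro h N' T coh
      obtain ⟨hne, happ, hcost⟩ := coh
      rcases h N' T ⟨hne, happ, hcost⟩ with hTW | ⟨i, hi, p, hpW, hlt⟩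
      · obtain ⟨i, hi⟩ := hne
        exact ⟨i, hi, hμ.1 _ _ (Finset.subset_inter (happ i hi) hTW)⟩
      · exact ⟨i, hi, key i T p hlt⟩
    · -- EJR → EJR1
      intro h N' T coh
      obtain ⟨i, hi, hμi⟩ := h N' T coh
      by_cases hTW : T ⊆ W
      · exact Or.inl hTW
      · obtain ⟨p, hpT, hpW⟩ := Finset.not_subset.mp hTW
        exact Or.inr ⟨i, hi, p, hpW, step i T (coh.2.1 i hi) hμi p (coh.2.1 i hi hpT) hpW⟩
  · constructor
    · -- EJRx → EJR
      intro h N' T coh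
      obtain ⟨i, hi, hall⟩ := h N' T coh
      by_cases hTW : T ⊆ W
      · exact ⟨i, hi, hμ.1 _ _ (Finset.subset_inter (coh.2.1 i hi) hTW)⟩
      · obtain ⟨p, hpT, hpW⟩ := Finset.not_subset.mp hTW
        exact ⟨i, hi, key i T p (hall p (Finset.mem_sdiff.mpr ⟨hpT, hpW⟩))⟩
    · -- EJR → EJRx
      intro h N' T coh
      obtain ⟨i, hi, hμi⟩ := h N' T coh
      refine ⟨i, hi, fun p hp => ?_⟩
      rcases Finset.mem_sdiff.mp hp with ⟨hpT, hpW⟩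
      exact step i T (coh.2.1 i hi) hμi p (coh.2.1 i hi hpT) hpW
end

section
/- Let μ be a DNS satisfaction function on an ABB instance. Then every output of the Method of Equal Shares MES[μ] satisfies EJR-x with respect to μ. -/
open Finset

namespace ABB

variable {V P : Type} [Fintype V] [DecidableEq V] [Fintype P] [DecidableEq P]

lemma exists_affordable (A : V → Finset P) (c : P → ℝ) (μ : Finset P → ℝ)
    (bud : V → ℝ) (p : P) (R : ℝ) (hR : 0 ≤ R)
    (hbud : ∀ i, 0 ≤ bud i) (hcp : 0 ≤ c p)
    (h2 : c p ≤ ∑ i ∈ approvers A p, min (bud i) (R * μ {p})) :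
    ∃ ρ, 0 ≤ ρ ∧ Affordable A c μ bud p ρ ∧ ρ ≤ R := by
  have hf : Continuous (fun ρ : ℝ => ∑ i ∈ approvers A p, min (bud i) (ρ * μ {p})) := by
    apply continuous_finset_sum
    intro i _
    exact continuous_const.min (continuous_id.mul continuous_const)
  have h0 : (∑ i ∈ approvers A p, min (bud i) ((0:ℝ) * μ {p})) = 0 := by
    refine Finset.sum_eq_zero fun i _ => ?_
    rw [zero_mul]
    exact min_eq_right (hbud i)
  have hiv := intermediate_value_Icc hR hf.continuousOn
  have hmem : c p ∈ Set.Icc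
      ((fun ρ : ℝ => ∑ i ∈ approvers A p, min (bud i) (ρ * μ {p})) 0)
      ((fun ρ : ℝ => ∑ i ∈ approvers A p, min (bud i) (ρ * μ {p})) R) := by
    constructor
    · show (∑ i ∈ approvers A p, min (bud i) ((0:ℝ) * μ {p})) ≤ c p
      rw [h0]; exact hcp
    · exact h2
  obtain ⟨ρ, hρ, hfρ⟩ := hiv hmem
  exact ⟨ρ, hρ.1, hfρ, hρ.2⟩

lemma mesReach_bud_nonneg {A : V → Finset P} {c : P → ℝ} {μ : Finset P → ℝ} {b0 : ℝ}
    {W : Finset P} {bud : V → ℝ} (h : MESReach A c μ b0 W bud) (hb0 : 0 ≤ b0) :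
    ∀ i, 0 ≤ bud i := by
  induction h with
  | init => intro i; exact hb0
  | step _ _ _ _ _ ih =>
      intro i
      dsimp only
      split
      · exact sub_nonneg.mpr (min_le_left _ _)
      · exact ih i

end ABB

set_option maxHeartbeats 1000000 in
/-- For a DNS satisfaction function `μ`, every output of MES[μ]
satisfies EJR-x w.r.t. `μ`. -/
theorem statement6 {V P : Type} [Fintype V] [DecidableEq V] [Fintype P] [DecidableEq P]
    (A : V → Finset P) (c : P → ℝ) (b : ℝ)
    (hn : 0 < Fintype.card V) (hc : ∀ p : P, 0 < c p) (hb : 0 < b)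
    (μ : Finset P → ℝ) (hμ : ABB.IsSatFun μ) (hdns : ABB.DNS c μ)
    (W : Finset P) (hW : ABB.MESOutput A c b μ W) :
    ABB.EJRx A c b μ W := by
  intro N' T hcoh
  obtain ⟨hN'ne, hTA, hTb⟩ := hcoh
  obtain ⟨i0, hi0⟩ := hN'ne
  by_cases hTWe : T \ W = ∅
  · refine ⟨i0, hi0, fun p hp => ?_⟩
    rw [hTWe] at hp
    exact absurd hp (Finset.notMem_empty p)
  by_contra hcon
  push_neg at hcon
  obtain ⟨hμmono, hμzero, hμnn⟩ := hμ
  obtain ⟨hadd, hdns2⟩ := hdns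
  obtain ⟨bud, hreach, hterm⟩ := hW
  have hμpos : ∀ q : P, 0 < μ {q} := fun q =>
    lt_of_le_of_ne (hμnn _) fun h =>
      Finset.singleton_ne_empty q ((hμzero {q}).mp h.symm)
  set n : ℝ := (Fintype.card V : ℝ) with hndef
  have hnpos : (0:ℝ) < n := by rw [hndef]; exact_mod_cast hn
  set b0 : ℝ := b / n with hb0def
  have hb0 : 0 < b0 := div_pos hb hnpos
  obtain ⟨t, htTW, htmin⟩ :=
    Finset.exists_min_image (T \ W) c (Finset.nonempty_iff_ne_empty.mpr hTWe)
  have htT : t ∈ T := (Finset.mem_sdiff.mp htTW).1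
  have htW : t ∉ W := (Finset.mem_sdiff.mp htTW).2
  set n' : ℝ := (N'.card : ℝ) with hn'def
  have hn' : (0:ℝ) < n' := by
    have h1 : 0 < N'.card := Finset.card_pos.mpr ⟨i0, hi0⟩
    rw [hn'def]; exact_mod_cast h1
  set S1 : Finset P := (T ∩ W).filter (fun q => c q ≤ c t) with hS1def
  set x : ℝ := c t / n' with hxdef
  set ρs : ℝ := c t / (n' * μ {t}) with hρsdef
  have hxpos : 0 < x := div_pos (hc t) hn'
  have hρspos : 0 < ρs := div_pos (hc t) (mul_pos hn' (hμpos t))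
  have hρsx : ρs * μ {t} = x := by
    rw [hρsdef, hxdef]
    field_simp [hn'.ne', (hμpos t).ne']
  -- the negated EJR-x condition, uniformized using the cheapest project t
  have H : ∀ i ∈ N', μ (A i ∩ W) ≤ μ T - μ {t} := by
    intro i hi
    obtain ⟨p, hpTW, hple⟩ := hcon i hi
    have hpT : p ∈ T := (Finset.mem_sdiff.mp hpTW).1
    have hpW : p ∉ W := (Finset.mem_sdiff.mp hpTW).2
    have hpA : p ∈ A i := hTA i hi hpT
    have heq : A i ∩ insert p W = insert p (A i ∩ W) := by
      rw [Finset.inter_comm, Finset.insert_inter_of_mem hpA, Finset.inter_comm W (A i)]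
    have hpnot : p ∉ A i ∩ W := fun h => hpW (Finset.mem_of_mem_inter_right h)
    have hsplit : μ (insert p (A i ∩ W)) = μ {p} + μ (A i ∩ W) := by
      rw [hadd (insert p (A i ∩ W)), Finset.sum_insert hpnot, hadd (A i ∩ W)]
    have hct : c t ≤ c p := htmin p hpTW
    have hμtp : μ {t} ≤ μ {p} := (hdns2 t p hct).1
    rw [heq, hsplit] at hple
    linarith
  have hS1T : S1 ⊆ T := (Finset.filter_subset _ _).trans Finset.inter_subset_left
  have hS1W : S1 ⊆ W := (Finset.filter_subset _ _).trans Finset.inter_subset_right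
  -- ratio bound: each project of T outside S1 is at least as expensive as t
  have hratio : ∀ q ∈ T \ S1, ρs * μ {q} ≤ c q / n' := by
    intro q hq
    obtain ⟨hqT, hqS1⟩ := Finset.mem_sdiff.mp hq
    have hct : c t ≤ c q := by
      by_cases hqW : q ∈ W
      · by_contra hlt
        exact hqS1 (Finset.mem_filter.mpr
          ⟨Finset.mem_inter.mpr ⟨hqT, hqW⟩, le_of_not_ge hlt⟩)
      · exact htmin q (Finset.mem_sdiff.mpr ⟨hqT, hqW⟩)
    have hdiv := (hdns2 t q hct).2
    have hcross : μ {q} * c t ≤ μ {t} * c q := (div_le_div_iff₀ (hc q) (hc t)).mp hdiv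
    have heq : ρs * μ {q} = c t * μ {q} / (n' * μ {t}) := by
      rw [hρsdef, div_mul_eq_mul_div]
    rw [heq, div_le_div_iff₀ (mul_pos hn' (hμpos t)) hn']
    nlinarith [hn'.le]
  have hμsplit : μ T = μ (T \ S1) + μ S1 := by
    rw [hadd T, hadd (T \ S1), hadd S1]
    exact (Finset.sum_sdiff hS1T).symm
  have hTS1 : ρs * μ (T \ S1) ≤ (∑ q ∈ T \ S1, c q) / n' := by
    rw [hadd (T \ S1), Finset.mul_sum, Finset.sum_div]
    exact Finset.sum_le_sum hratio
  have hcoh' : (∑ q ∈ T, c q) / n' ≤ b0 := by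
    have h1 : ABB.costOf c T ≤ n' / n * b := hTb
    rw [ABB.costOf] at h1
    rw [div_le_iff₀ hn']
    calc ∑ q ∈ T, c q ≤ n' / n * b := h1
      _ = b0 * n' := by rw [hb0def]; ring
  -- the key arithmetic inequality
  have hkey : x + (∑ q ∈ S1, c q) / n' + ρs * (μ T - μ {t} - μ S1) ≤ b0 := by
    have h1 : ρs * (μ T - μ {t} - μ S1) = ρs * μ (T \ S1) - x := by
      rw [hμsplit, ← hρsx]; ring
    rw [h1]
    have h2 : (∑ q ∈ S1, c q) / n' + ρs * μ (T \ S1) ≤ (∑ q ∈ T, c q) / n' := by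
      calc (∑ q ∈ S1, c q) / n' + ρs * μ (T \ S1)
          ≤ (∑ q ∈ S1, c q) / n' + (∑ q ∈ T \ S1, c q) / n' := by linarith
        _ = (∑ q ∈ T, c q) / n' := by
            rw [← add_div, add_comm, Finset.sum_sdiff hS1T]
    linarith
  -- spending bound implies budgets stay above x
  have key_bud : ∀ (W' : Finset P) (bud' : V → ℝ), W' ⊆ W →
      (∀ i ∈ N', b0 - bud' i ≤ (∑ q ∈ S1 ∩ W', c q) / n' + ρs * μ ((A i ∩ W') \ S1)) →
      ∀ i ∈ N', x ≤ bud' i := by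
    intro W' bud' hsub hbd i hi
    have h1 : (∑ q ∈ S1 ∩ W', c q) ≤ ∑ q ∈ S1, c q :=
      Finset.sum_le_sum_of_subset_of_nonneg Finset.inter_subset_left
        (fun q _ _ => (hc q).le)
    have h2 : μ ((A i ∩ W') \ S1) ≤ μ ((A i ∩ W) \ S1) :=
      hμmono _ _ (Finset.sdiff_subset_sdiff
        (Finset.inter_subset_inter (Finset.Subset.refl _) hsub) (Finset.Subset.refl _))
    have hS1iW : S1 ⊆ A i ∩ W := fun q hq =>
      Finset.mem_inter.mpr ⟨hTA i hi (hS1T hq), hS1W hq⟩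
    have h3 : μ ((A i ∩ W) \ S1) = μ (A i ∩ W) - μ S1 := by
      rw [hadd ((A i ∩ W) \ S1), hadd (A i ∩ W), hadd S1, eq_sub_iff_add_eq]
      exact Finset.sum_sdiff hS1iW
    have h4 : μ ((A i ∩ W') \ S1) ≤ μ T - μ {t} - μ S1 := by
      have h5 := H i hi
      linarith
    have h6 := hbd i hi
    have hmul : ρs * μ ((A i ∩ W') \ S1) ≤ ρs * (μ T - μ {t} - μ S1) :=
      mul_le_mul_of_nonneg_left h4 hρspos.le
    have hdiv : (∑ q ∈ S1 ∩ W', c q) / n' ≤ (∑ q ∈ S1, c q) / n' := by gcongr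
    linarith
  -- if budgets of N' are all ≥ x, then any q ∈ T with c q ≤ c t can be afforded
  have aff_bound : ∀ (bud' : V → ℝ) (q : P), q ∈ T → c q ≤ c t →
      (∀ j ∈ N', x ≤ bud' j) → (∀ j, 0 ≤ bud' j) →
      c q ≤ ∑ j ∈ ABB.approvers A q, min (bud' j) ((c q / (n' * μ {q})) * μ {q}) := by
    intro bud' q hqT hcq hx' hnn'
    have hRq : (c q / (n' * μ {q})) * μ {q} = c q / n' := by
      field_simp [hn'.ne', (hμpos q).ne']
    have hsubq : N' ⊆ ABB.approvers A q := fun j hj =>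
      Finset.mem_filter.mpr ⟨Finset.mem_univ j, hTA j hj hqT⟩
    have hqx : c q / n' ≤ x := by
      rw [hxdef]; gcongr
    calc c q = n' * (c q / n') := by field_simp [hn'.ne']
      _ = ∑ _j ∈ N', c q / n' := by
          rw [Finset.sum_const, nsmul_eq_mul, hn'def]
      _ ≤ ∑ j ∈ N', min (bud' j) ((c q / (n' * μ {q})) * μ {q}) := by
          refine Finset.sum_le_sum fun j hj => ?_
          rw [hRq]
          exact le_min (hqx.trans (hx' j hj)) le_rfl
      _ ≤ ∑ j ∈ ABB.approvers A q, min (bud' j) ((c q / (n' * μ {q})) * μ {q}) := by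
          refine Finset.sum_le_sum_of_subset_of_nonneg hsubq fun j _ _ => ?_
          exact le_min (hnn' j)
            (mul_nonneg (div_nonneg (hc q).le (mul_pos hn' (hμpos q)).le) (hμnn _))
  -- main induction along the MES run: spending bound
  have main : ∀ (W' : Finset P) (bud' : V → ℝ), ABB.MESReach A c μ b0 W' bud' → W' ⊆ W →
      ∀ i ∈ N', b0 - bud' i ≤ (∑ q ∈ S1 ∩ W', c q) / n' + ρs * μ ((A i ∩ W') \ S1) := by
    intro W' bud' hre
    induction hre with
    | init =>
        intro _ i hi
        have hμ0 : μ (∅ : Finset P) = 0 := (hμzero ∅).mpr rfl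
        simp [hμ0]
    | @step W0 bud0 p ρ hre0 hpW0 hρnn haff hmin ih =>
        intro hsub i hi
        have hW0W : W0 ⊆ W := (Finset.subset_insert p W0).trans hsub
        have hbd0 := ih hW0W
        have hx0 : ∀ j ∈ N', x ≤ bud0 j := key_bud W0 bud0 hW0W hbd0
        have hnn0 : ∀ j, 0 ≤ bud0 j := ABB.mesReach_bud_nonneg hre0 hb0.le
        have hρρs : ρ ≤ ρs := by
          have htW0 : t ∉ W0 := fun h => htW (hW0W h)
          have hsum := aff_bound bud0 t htT le_rfl hx0 hnn0
          rw [← hρsdef] at hsum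
          obtain ⟨ρ', hρ'0, haff', hρ'R⟩ :=
            ABB.exists_affordable A c μ bud0 t ρs hρspos.le hnn0 (hc t).le hsum
          exact (hmin t htW0 ρ' hρ'0 haff').trans hρ'R
        dsimp only
        by_cases hpS1 : p ∈ S1
        · have hpT : p ∈ T := hS1T hpS1
          have hcp : c p ≤ c t := (Finset.mem_filter.mp hpS1).2
          have hpA : p ∈ A i := hTA i hi hpT
          rw [if_pos hpA]
          have hρRp : ρ ≤ c p / (n' * μ {p}) := by
            have hsum := aff_bound bud0 p hpT hcp hx0 hnn0
            obtain ⟨ρ', hρ'0, haff', hρ'R⟩ :=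
              ABB.exists_affordable A c μ bud0 p (c p / (n' * μ {p}))
                (div_nonneg (hc p).le (mul_pos hn' (hμpos p)).le) hnn0 (hc p).le hsum
            exact (hmin p hpW0 ρ' hρ'0 haff').trans hρ'R
          have hpay : min (bud0 i) (ρ * μ {p}) ≤ c p / n' := by
            calc min (bud0 i) (ρ * μ {p}) ≤ ρ * μ {p} := min_le_right _ _
              _ ≤ (c p / (n' * μ {p})) * μ {p} :=
                  mul_le_mul_of_nonneg_right hρRp (hμnn _)
              _ = c p / n' := by
                  field_simp [hn'.ne', (hμpos p).ne']
          have hsum1 : ∑ q ∈ S1 ∩ insert p W0, c q = c p + ∑ q ∈ S1 ∩ W0, c q := by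
            rw [Finset.inter_comm, Finset.insert_inter_of_mem hpS1,
              Finset.sum_insert (fun h => hpW0 (Finset.mem_inter.mp h).1),
              Finset.inter_comm]
          have hset2 : (A i ∩ insert p W0) \ S1 = (A i ∩ W0) \ S1 := by
            ext q
            simp only [Finset.mem_sdiff, Finset.mem_inter, Finset.mem_insert]
            constructor
            · rintro ⟨⟨hqa, rfl | hqw⟩, hqs⟩
              · exact absurd hpS1 hqs
              · exact ⟨⟨hqa, hqw⟩, hqs⟩
            · rintro ⟨⟨hqa, hqw⟩, hqs⟩
              exact ⟨⟨hqa, Or.inr hqw⟩, hqs⟩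
          rw [hsum1, hset2]
          have := hbd0 i hi
          have hpay' : b0 - (bud0 i - min (bud0 i) (ρ * μ {p}))
              = (b0 - bud0 i) + min (bud0 i) (ρ * μ {p}) := by ring
          rw [hpay', add_div]
          linarith
        · by_cases hpA : p ∈ A i
          · rw [if_pos hpA]
            have hset1 : S1 ∩ insert p W0 = S1 ∩ W0 := by
              rw [Finset.inter_comm, Finset.insert_inter_of_notMem hpS1,
                Finset.inter_comm]
            have hset2 : (A i ∩ insert p W0) \ S1 = insert p ((A i ∩ W0) \ S1) := by
              ext q
              simp only [Finset.mem_sdiff, Finset.mem_inter, Finset.mem_insert]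
              constructor
              · rintro ⟨⟨hqa, rfl | hqw⟩, hqs⟩
                · exact Or.inl rfl
                · exact Or.inr ⟨⟨hqa, hqw⟩, hqs⟩
              · rintro (rfl | ⟨⟨hqa, hqw⟩, hqs⟩)
                · exact ⟨⟨hpA, Or.inl rfl⟩, hpS1⟩
                · exact ⟨⟨hqa, Or.inr hqw⟩, hqs⟩
            have hpnot : p ∉ (A i ∩ W0) \ S1 := fun h =>
              hpW0 (Finset.mem_of_mem_inter_right (Finset.mem_sdiff.mp h).1)
            have hμins : μ (insert p ((A i ∩ W0) \ S1))
                = μ {p} + μ ((A i ∩ W0) \ S1) := by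
              rw [hadd (insert p ((A i ∩ W0) \ S1)), Finset.sum_insert hpnot,
                hadd ((A i ∩ W0) \ S1)]
            rw [hset1, hset2, hμins]
            have hpay : min (bud0 i) (ρ * μ {p}) ≤ ρs * μ {p} := by
              calc min (bud0 i) (ρ * μ {p}) ≤ ρ * μ {p} := min_le_right _ _
                _ ≤ ρs * μ {p} := mul_le_mul_of_nonneg_right hρρs (hμnn _)
            have := hbd0 i hi
            have hre : b0 - (bud0 i - min (bud0 i) (ρ * μ {p}))
                = (b0 - bud0 i) + min (bud0 i) (ρ * μ {p}) := by ring
            rw [hre, mul_add]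
            linarith
          · rw [if_neg hpA]
            have hset1 : S1 ∩ insert p W0 = S1 ∩ W0 := by
              rw [Finset.inter_comm, Finset.insert_inter_of_notMem hpS1,
                Finset.inter_comm]
            have hset2 : (A i ∩ insert p W0) \ S1 = (A i ∩ W0) \ S1 := by
              rw [Finset.inter_comm, Finset.insert_inter_of_notMem hpA,
                Finset.inter_comm]
            rw [hset1, hset2]
            exact hbd0 i hi
  -- conclude: at the final state t is still affordable, contradiction
  have hfin := main W bud hreach (Finset.Subset.refl W)
  have hxW : ∀ j ∈ N', x ≤ bud j := key_bud W bud (Finset.Subset.refl W) hfin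
  have hnnW : ∀ j, 0 ≤ bud j := ABB.mesReach_bud_nonneg hreach hb0.le
  have hsum := aff_bound bud t htT le_rfl hxW hnnW
  rw [← hρsdef] at hsum
  obtain ⟨ρ, hρ0, haff, _⟩ :=
    ABB.exists_affordable A c μ bud t ρs hρspos.le hnnW (hc t).le hsum
  exact hterm t htW ρ hρ0 haff
end

section
/- There exists an ABB instance for which no outcome satisfies both EJR-1 with respect to the cost-based satisfaction function μ^c and EJR-1 with respect to the cardinality-based satisfaction function μ^#. (Concretely: two voters, twelve projects p_1,…,p_12 with c(p_1) = c(p_2) = 5 and c(p_j) = 1 for j ≥ 3, approval ballots A_1 = {p_1,…,p_7} and A_2 = {p_1, p_2, p_8,…,p_12}, and budget b = 10, form such an instance.) -/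
open Finset

section Statement7Aux

private lemma s7_cost (S : Finset (Fin 12)) :
    ABB.costOf (fun p : Fin 12 => if (p : ℕ) < 2 then (5:ℝ) else 1) S
      = (S.card : ℝ) + 4 * ((S ∩ {0,1}).card : ℝ) := by
  have h : ∀ p ∈ S, (if (p : ℕ) < 2 then (5:ℝ) else 1)
      = 1 + (if p ∈ ({0,1} : Finset (Fin 12)) then (4:ℝ) else 0) := by
    intro p _
    fin_cases p <;> norm_num <;> decide
  rw [ABB.costOf, Finset.sum_congr rfl h, Finset.sum_add_distrib,
      Finset.sum_const, Finset.sum_ite_mem, Finset.sum_const]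
  simp [nsmul_eq_mul]
  ring

private lemma s7_card_ge (A0 C : Finset (Fin 12)) (W : Finset (Fin 12))
    (hCA : C ⊆ A0) (hC : C.card = 5)
    (h : C ⊆ W ∨ ∃ p ∉ W, 5 < (A0 ∩ insert p W).card) :
    5 ≤ (A0 ∩ W).card := by
  rcases h with h | ⟨p, -, hlt⟩
  · calc 5 = C.card := hC.symm
      _ ≤ (A0 ∩ W).card := Finset.card_le_card (Finset.subset_inter hCA h)
  · have hsub : A0 ∩ insert p W ⊆ insert p (A0 ∩ W) := by
      intro x hx
      simp only [Finset.mem_inter, Finset.mem_insert] at hx ⊢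
      tauto
    have := (Finset.card_le_card hsub).trans (Finset.card_insert_le _ _)
    omega

private lemma s7_nat (W : Finset (Fin 12))
    (hW : W.card + 4 * (W ∩ {0,1}).card ≤ 10)
    (H1 : ({0,1} : Finset (Fin 12)) ⊆ W
        ∨ (∃ p ∉ W, 10 < (({0,1,2,3,4,5,6} : Finset (Fin 12)) ∩ insert p W).card
              + 4 * ((({0,1,2,3,4,5,6} : Finset (Fin 12)) ∩ insert p W) ∩ {0,1}).card)
        ∨ (∃ p ∉ W, 10 < (({0,1,7,8,9,10,11} : Finset (Fin 12)) ∩ insert p W).card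
              + 4 * ((({0,1,7,8,9,10,11} : Finset (Fin 12)) ∩ insert p W) ∩ {0,1}).card))
    (H2 : ({2,3,4,5,6} : Finset (Fin 12)) ⊆ W
        ∨ ∃ p ∉ W, 5 < (({0,1,2,3,4,5,6} : Finset (Fin 12)) ∩ insert p W).card)
    (H3 : ({7,8,9,10,11} : Finset (Fin 12)) ⊆ W
        ∨ ∃ p ∉ W, 5 < (({0,1,7,8,9,10,11} : Finset (Fin 12)) ∩ insert p W).card) :
    False := by
  have ha0 : 5 ≤ ((({0,1,2,3,4,5,6} : Finset (Fin 12))) ∩ W).card :=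
    s7_card_ge _ {2,3,4,5,6} W (by decide) (by decide) H2
  have ha1 : 5 ≤ ((({0,1,7,8,9,10,11} : Finset (Fin 12))) ∩ W).card :=
    s7_card_ge _ {7,8,9,10,11} W (by decide) (by decide) H3
  have key := Finset.card_inter_add_card_union
    (({0,1,2,3,4,5,6} : Finset (Fin 12)) ∩ W) (({0,1,7,8,9,10,11} : Finset (Fin 12)) ∩ W)
  rw [Finset.inter_inter_inter_comm, Finset.inter_self,
      show ({0,1,2,3,4,5,6} : Finset (Fin 12)) ∩ {0,1,7,8,9,10,11} = {0,1} from by decide,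
      ← Finset.union_inter_distrib_right,
      show ({0,1,2,3,4,5,6} : Finset (Fin 12)) ∪ {0,1,7,8,9,10,11} = Finset.univ from by decide,
      Finset.univ_inter] at key
  have hkcomm : (W ∩ ({0,1} : Finset (Fin 12))).card = (({0,1} : Finset (Fin 12)) ∩ W).card := by
    rw [Finset.inter_comm]
  have hkle : (({0,1} : Finset (Fin 12)) ∩ W).card ≤ 2 :=
    (Finset.card_le_card Finset.inter_subset_left).trans (by decide)
  have hk0 : (({0,1} : Finset (Fin 12)) ∩ W).card = 0 := by omega
  have hWcard : W.card = 10 := by omega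
  have hempty : (({0,1} : Finset (Fin 12)) ∩ W) = ∅ := Finset.card_eq_zero.mp hk0
  have hWsub : W ⊆ ({2,3,4,5,6,7,8,9,10,11} : Finset (Fin 12)) := by
    rw [show ({2,3,4,5,6,7,8,9,10,11} : Finset (Fin 12)) = Finset.univ \ {0,1} from by decide]
    refine Finset.subset_sdiff.mpr ⟨Finset.subset_univ _, ?_⟩
    rw [disjoint_comm, Finset.disjoint_iff_inter_eq_empty]
    exact hempty
  have hWeq : W = ({2,3,4,5,6,7,8,9,10,11} : Finset (Fin 12)) :=
    Finset.eq_of_subset_of_card_le hWsub (by rw [hWcard]; decide)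
  subst hWeq
  rcases H1 with h | ⟨p, hp, hlt⟩ | ⟨p, hp, hlt⟩
  · exact absurd h (by decide)
  · revert hp hlt; fin_cases p <;> decide
  · revert hp hlt; fin_cases p <;> decide

end Statement7Aux

/-- There exists an ABB instance for which no outcome satisfies both
EJR-1 w.r.t. the cost-based satisfaction function `μ^c` and EJR-1 w.r.t. the
cardinality-based satisfaction function `μ^#`. -/
theorem statement7 :
    ∃ (n m : ℕ) (A : Fin n → Finset (Fin m)) (c : Fin m → ℝ) (b : ℝ),
      (∀ p : Fin m, 0 < c p) ∧ 0 < b ∧ 0 < n ∧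
      ∀ W : Finset (Fin m), ABB.costOf c W ≤ b →
        ¬ (ABB.EJR1 A c b (ABB.costOf c) W ∧
           ABB.EJR1 A c b (fun S => (S.card : ℝ)) W) := by
  classical
  refine ⟨2, 12, ![({0,1,2,3,4,5,6} : Finset (Fin 12)), ({0,1,7,8,9,10,11} : Finset (Fin 12))],
    (fun p : Fin 12 => if (p : ℕ) < 2 then (5:ℝ) else 1), 10, ?_, by norm_num, by norm_num, ?_⟩
  · intro p; dsimp only; split <;> norm_num
  intro W hW
  rintro ⟨hc, hk⟩
  have coh12 : ABB.Cohesive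
      (![({0,1,2,3,4,5,6} : Finset (Fin 12)), ({0,1,7,8,9,10,11} : Finset (Fin 12))])
      (fun p : Fin 12 => if (p : ℕ) < 2 then (5:ℝ) else 1) 10 Finset.univ {0,1} := by
    refine ⟨⟨0, Finset.mem_univ 0⟩, ?_, ?_⟩
    · intro i _
      fin_cases i <;> decide
    · rw [s7_cost]
      norm_num [show (({0,1} : Finset (Fin 12)) ∩ {0,1}).card = 2 from by decide,
        show (({0,1} : Finset (Fin 12))).card = 2 from by decide, Finset.card_univ]
  have coh1 : ABB.Cohesive
      (![({0,1,2,3,4,5,6} : Finset (Fin 12)), ({0,1,7,8,9,10,11} : Finset (Fin 12))])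
      (fun p : Fin 12 => if (p : ℕ) < 2 then (5:ℝ) else 1) 10 {0} {2,3,4,5,6} := by
    refine ⟨⟨0, Finset.mem_singleton_self 0⟩, ?_, ?_⟩
    · intro i hi
      rw [Finset.mem_singleton] at hi
      subst hi
      decide
    · rw [s7_cost]
      norm_num [show (({2,3,4,5,6} : Finset (Fin 12)) ∩ {0,1}).card = 0 from by decide,
        show (({2,3,4,5,6} : Finset (Fin 12))).card = 5 from by decide]
  have coh2 : ABB.Cohesive
      (![({0,1,2,3,4,5,6} : Finset (Fin 12)), ({0,1,7,8,9,10,11} : Finset (Fin 12))])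
      (fun p : Fin 12 => if (p : ℕ) < 2 then (5:ℝ) else 1) 10 {1} {7,8,9,10,11} := by
    refine ⟨⟨1, Finset.mem_singleton_self 1⟩, ?_, ?_⟩
    · intro i hi
      rw [Finset.mem_singleton] at hi
      subst hi
      decide
    · rw [s7_cost]
      norm_num [show (({7,8,9,10,11} : Finset (Fin 12)) ∩ {0,1}).card = 0 from by decide,
        show (({7,8,9,10,11} : Finset (Fin 12))).card = 5 from by decide]
  have h1 := hc Finset.univ {0,1} coh12
  have h2 := hk {0} {2,3,4,5,6} coh1
  have h3 := hk {1} {7,8,9,10,11} coh2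
  rw [s7_cost] at hW
  have hWn : W.card + 4 * (W ∩ ({0,1} : Finset (Fin 12))).card ≤ 10 := by
    exact_mod_cast hW
  have H1 : ({0,1} : Finset (Fin 12)) ⊆ W
      ∨ (∃ p ∉ W, 10 < (({0,1,2,3,4,5,6} : Finset (Fin 12)) ∩ insert p W).card
            + 4 * ((({0,1,2,3,4,5,6} : Finset (Fin 12)) ∩ insert p W) ∩ {0,1}).card)
      ∨ (∃ p ∉ W, 10 < (({0,1,7,8,9,10,11} : Finset (Fin 12)) ∩ insert p W).card
            + 4 * ((({0,1,7,8,9,10,11} : Finset (Fin 12)) ∩ insert p W) ∩ {0,1}).card) := by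
    rcases h1 with h | ⟨i, -, p, hp, hlt⟩
    · exact Or.inl h
    · rw [s7_cost, s7_cost,
        show (({0,1} : Finset (Fin 12)) ∩ {0,1}).card = 2 from by decide,
        show (({0,1} : Finset (Fin 12))).card = 2 from by decide] at hlt
      fin_cases i
      · refine Or.inr (Or.inl ⟨p, hp, ?_⟩)
        simp only [Fin.zero_eta, Fin.isValue, Matrix.cons_val_zero] at hlt
        exact_mod_cast (by push_cast at hlt ⊢; linarith : ((10:ℕ):ℝ)
          < ((({0,1,2,3,4,5,6} : Finset (Fin 12)) ∩ insert p W).card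
            + 4 * ((({0,1,2,3,4,5,6} : Finset (Fin 12)) ∩ insert p W) ∩ {0,1}).card : ℕ))
      · refine Or.inr (Or.inr ⟨p, hp, ?_⟩)
        simp only [Fin.mk_one, Fin.isValue, Matrix.cons_val_one, Matrix.head_cons] at hlt
        exact_mod_cast (by push_cast at hlt ⊢; linarith : ((10:ℕ):ℝ)
          < ((({0,1,7,8,9,10,11} : Finset (Fin 12)) ∩ insert p W).card
            + 4 * ((({0,1,7,8,9,10,11} : Finset (Fin 12)) ∩ insert p W) ∩ {0,1}).card : ℕ))
  have H2 : ({2,3,4,5,6} : Finset (Fin 12)) ⊆ W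
      ∨ ∃ p ∉ W, 5 < (({0,1,2,3,4,5,6} : Finset (Fin 12)) ∩ insert p W).card := by
    rcases h2 with h | ⟨i, hi, p, hp, hlt⟩
    · exact Or.inl h
    · rw [Finset.mem_singleton] at hi
      subst hi
      refine Or.inr ⟨p, hp, ?_⟩
      simp only [Matrix.cons_val_zero,
        show (({2,3,4,5,6} : Finset (Fin 12))).card = 5 from by decide] at hlt
      exact_mod_cast hlt
  have H3 : ({7,8,9,10,11} : Finset (Fin 12)) ⊆ W
      ∨ ∃ p ∉ W, 5 < (({0,1,7,8,9,10,11} : Finset (Fin 12)) ∩ insert p W).card := by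
    rcases h3 with h | ⟨i, hi, p, hp, hlt⟩
    · exact Or.inl h
    · rw [Finset.mem_singleton] at hi
      subst hi
      refine Or.inr ⟨p, hp, ?_⟩
      simp only [Matrix.cons_val_one, Matrix.head_cons,
        show (({7,8,9,10,11} : Finset (Fin 12))).card = 5 from by decide] at hlt
      exact_mod_cast hlt
  exact s7_nat W hWn H1 H2 H3
end

section
/- For every ABB instance and every satisfaction function μ, there exists an outcome W (i.e., a set W ⊆ P with c(W) ≤ b) that satisfies PJR with respect to μ. -/
open Finset

open Classical in
/-- Greedy cohesive rule: by strong induction on the active voter set. -/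
lemma gcr_aux {V P : Type} [Fintype V] [DecidableEq V] [Fintype P] [DecidableEq P]
    (A : V → Finset P) (c : P → ℝ) (b : ℝ)
    (hc : ∀ p : P, 0 < c p) (hb : 0 < b)
    (μ : Finset P → ℝ) (hμ : ABB.IsSatFun μ) :
    ∀ (k : ℕ) (act : Finset V), act.card ≤ k →
      ∃ W : Finset P,
        ABB.costOf c W ≤ ((act.card : ℝ) / (Fintype.card V : ℝ)) * b ∧
        ∀ N' T, ABB.Cohesive A c b N' T → N' ⊆ act →
          ∃ i ∈ N', μ T ≤ μ (A i ∩ W) := by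
  obtain ⟨hmono, hzero, hnonneg⟩ := hμ
  intro k
  induction k with
  | zero =>
    intro act hact
    refine ⟨∅, ?_, ?_⟩
    · have : ABB.costOf c (∅ : Finset P) = 0 := by simp [ABB.costOf]
      rw [this]
      positivity
    · intro N' T hcoh hsub
      have : act = ∅ := Finset.card_eq_zero.mp (Nat.le_zero.mp hact)
      obtain ⟨i, hi⟩ := hcoh.1
      exact absurd (hsub hi) (by simp [this])
  | succ k ih =>
    intro act hact
    by_cases hP : ∃ q : Finset V × Finset P,
        q.1 ⊆ act ∧ ABB.Cohesive A c b q.1 q.2 ∧ q.2.Nonempty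
    · -- pick a pair maximizing μ T
      set pred : Finset V × Finset P → Prop :=
        fun q => q.1 ⊆ act ∧ ABB.Cohesive A c b q.1 q.2 ∧ q.2.Nonempty with hpred
      have hne : (Finset.univ.filter pred).Nonempty := by
        obtain ⟨q, hq⟩ := hP
        exact ⟨q, by simpa [hpred] using hq⟩
      obtain ⟨q, hqmem, hqmax⟩ :=
        Finset.exists_max_image (Finset.univ.filter pred) (fun q => μ q.2) hne
      obtain ⟨S, T⟩ := q
      have hq : pred (S, T) := (Finset.mem_filter.mp hqmem).2
      obtain ⟨hSact, hScoh, hTne⟩ := hq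
      have hSne : S.Nonempty := hScoh.1
      have hss : act \ S ⊂ act := Finset.sdiff_ssubset hSact hSne
      have hcard : (act \ S).card ≤ k := by
        have := Finset.card_lt_card hss
        omega
      obtain ⟨W', hW'cost, hW'ejr⟩ := ih (act \ S) hcard
      refine ⟨T ∪ W', ?_, ?_⟩
      · -- cost bound
        have h1 : ABB.costOf c (T ∪ W') ≤ ABB.costOf c T + ABB.costOf c W' := by
          unfold ABB.costOf
          have := Finset.sum_union_inter (s₁ := T) (s₂ := W') (f := c)
          have hnn : (0 : ℝ) ≤ ∑ p ∈ T ∩ W', c p :=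
            Finset.sum_nonneg fun p _ => (hc p).le
          linarith
        have h2 : ABB.costOf c T ≤ ((S.card : ℝ) / (Fintype.card V : ℝ)) * b :=
          hScoh.2.2
        have hcards : ((act \ S).card : ℝ) + (S.card : ℝ) = (act.card : ℝ) := by
          have := Finset.card_sdiff_add_card_eq_card hSact
          exact_mod_cast congrArg (fun m : ℕ => (m : ℝ)) this
        calc ABB.costOf c (T ∪ W') ≤ ABB.costOf c T + ABB.costOf c W' := h1
          _ ≤ ((S.card : ℝ) / (Fintype.card V : ℝ)) * b
              + (((act \ S).card : ℝ) / (Fintype.card V : ℝ)) * b := by linarith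
          _ = (((act \ S).card : ℝ) + (S.card : ℝ)) / (Fintype.card V : ℝ) * b := by
              ring
          _ = ((act.card : ℝ) / (Fintype.card V : ℝ)) * b := by rw [hcards]
      · intro N' T₀ hcoh hsub
        by_cases hsub' : N' ⊆ act \ S
        · obtain ⟨i, hi, hle⟩ := hW'ejr N' T₀ hcoh hsub'
          refine ⟨i, hi, hle.trans (hmono _ _ ?_)⟩
          exact Finset.inter_subset_inter le_rfl Finset.subset_union_right
        · -- some i ∈ N' ∩ S
          obtain ⟨i, hiN, hiS⟩ : ∃ i ∈ N', i ∈ S := by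
            obtain ⟨i, hiN, hinot⟩ := Finset.not_subset.mp hsub'
            refine ⟨i, hiN, ?_⟩
            by_contra hni
            exact hinot (Finset.mem_sdiff.mpr ⟨hsub hiN, hni⟩)
          rcases Finset.eq_empty_or_nonempty T₀ with hT₀ | hT₀
          · refine ⟨i, hiN, ?_⟩
            rw [hT₀, (hzero ∅).mpr rfl]
            exact hnonneg _
          · have hmem₀ : (N', T₀) ∈ Finset.univ.filter pred := by
              simp only [Finset.mem_filter, Finset.mem_univ, true_and, hpred]
              exact ⟨hsub, hcoh, hT₀⟩
            have hle : μ T₀ ≤ μ T := hqmax (N', T₀) hmem₀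
            refine ⟨i, hiN, hle.trans (hmono _ _ ?_)⟩
            intro p hp
            exact Finset.mem_inter.mpr
              ⟨hScoh.2.1 i hiS hp, Finset.mem_union_left _ hp⟩
    · -- no cohesive pair with nonempty T inside act
      refine ⟨∅, ?_, ?_⟩
      · have : ABB.costOf c (∅ : Finset P) = 0 := by simp [ABB.costOf]
        rw [this]; positivity
      · intro N' T hcoh hsub
        obtain ⟨i, hi⟩ := hcoh.1
        rcases Finset.eq_empty_or_nonempty T with hT | hT
        · refine ⟨i, hi, ?_⟩
          rw [hT, (hzero ∅).mpr rfl]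
          exact hnonneg _
        · exact absurd ⟨(N', T), hsub, hcoh, hT⟩ hP

/-- For every ABB instance and satisfaction function `μ`, there is an
outcome satisfying PJR w.r.t. `μ`. -/
theorem statement8 {V P : Type} [Fintype V] [DecidableEq V] [Fintype P] [DecidableEq P]
    (A : V → Finset P) (c : P → ℝ) (b : ℝ)
    (hn : 0 < Fintype.card V) (hc : ∀ p : P, 0 < c p) (hb : 0 < b)
    (μ : Finset P → ℝ) (hμ : ABB.IsSatFun μ) :
    ∃ W : Finset P, ABB.costOf c W ≤ b ∧ ABB.PJR A c b μ W := by
  obtain ⟨W, hcost, hejr⟩ :=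
    gcr_aux A c b hc hb μ hμ (Fintype.card V) Finset.univ
      (le_of_eq (Finset.card_univ))
  have hn' : ((Fintype.card V : ℝ)) ≠ 0 := by
    exact_mod_cast hn.ne'
  refine ⟨W, ?_, ?_⟩
  · have : ((Finset.univ : Finset V).card : ℝ) / (Fintype.card V : ℝ) * b = b := by
      rw [Finset.card_univ, div_self hn', one_mul]
    rwa [this] at hcost
  · intro N' T hcoh
    obtain ⟨i, hi, hle⟩ := hejr N' T hcoh (Finset.subset_univ _)
    refine hle.trans (hμ.1 _ _ ?_)
    intro p hp
    rw [Finset.mem_inter] at hp ⊢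
    exact ⟨hp.2, Finset.mem_biUnion.mpr ⟨i, hi, hp.1⟩⟩
end

section
/- Consider a unit-cost ABB instance and a satisfaction function μ that is cost-neutral and strictly increasing. Then an outcome W satisfies PJR-x with respect to μ if and only if it satisfies PJR with respect to μ. -/
open Finset

/-- In a unit-cost ABB instance, for a cost-neutral and strictly
increasing satisfaction function `μ`, an outcome satisfies PJR-x w.r.t. `μ` iff it
satisfies PJR w.r.t. `μ`. -/
theorem statement10 {V P : Type} [Fintype V] [DecidableEq V] [Fintype P] [DecidableEq P]
    (A : V → Finset P) (c : P → ℝ) (b : ℝ)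
    (hn : 0 < Fintype.card V) (hc : ∀ p : P, 0 < c p) (hb : 0 < b)
    (hunit : ABB.UnitCost c)
    (μ : Finset P → ℝ) (hμ : ABB.IsSatFun μ)
    (hcn : ABB.CostNeutral c μ) (hsi : ABB.StrictlyIncreasing μ)
    (W : Finset P) (hW : ABB.costOf c W ≤ b) :
    ABB.PJRx A c b μ W ↔ ABB.PJR A c b μ W := by
  have key : ∀ S T : Finset P, S.card ≤ T.card → μ S ≤ μ T := by
    intro S T h
    obtain ⟨S', hS'T, hcard⟩ := Finset.exists_subset_card_eq h
    have heq : μ S = μ S' := by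
      refine hcn S S' ⟨Finset.equivOfCardEq hcard.symm, (Finset.equivOfCardEq hcard.symm).bijective, ?_⟩
      intro p; rw [hunit, hunit]
    exact heq ▸ hμ.1 S' T hS'T
  constructor
  · intro hx N' T hcoh
    obtain ⟨⟨i, hi⟩, hTA, _⟩ := hcoh
    have hTU : T ⊆ N'.biUnion A := fun q hq =>
      Finset.mem_biUnion.2 ⟨i, hi, hTA i hi hq⟩
    by_cases hTW : T ⊆ W
    · exact key T _ (Finset.card_le_card fun q hq =>
        Finset.mem_inter.2 ⟨hTW hq, hTU hq⟩)
    · obtain ⟨p, hpT, hpW⟩ := Finset.not_subset.1 hTW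
      by_contra hlt
      push_neg at hlt
      have h1 := hx N' T ⟨⟨i, hi⟩, hTA, by assumption⟩ p (Finset.mem_sdiff.2 ⟨hpT, hpW⟩)
      have hcard : (insert p (W ∩ N'.biUnion A)).card ≤ T.card := by
        have hlt' : (W ∩ N'.biUnion A).card < T.card := by
          by_contra hge
          push_neg at hge
          exact absurd (key T _ hge) (not_le.2 hlt)
        calc (insert p (W ∩ N'.biUnion A)).card ≤ (W ∩ N'.biUnion A).card + 1 :=
              Finset.card_insert_le _ _
          _ ≤ T.card := hlt'
      exact absurd (key _ T hcard) (not_le.2 h1)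
  · intro h N' T hcoh p hp
    have h1 := h N' T hcoh
    have hpW : p ∉ W ∩ N'.biUnion A := fun hmem =>
      (Finset.mem_sdiff.1 hp).2 (Finset.mem_inter.1 hmem).1
    have h2 := hsi _ _ (Finset.ssubset_insert hpW)
    linarith
end

section
/- Let W be an outcome of an ABB instance such that there is a price system (B, d) for W with B > b. Then W satisfies PJR-x with respect to the cost-based satisfaction function μ^c. -/
open Finset

/-- If an outcome `W` admits a price system `(B, d)` with `B > b`,
then `W` satisfies PJR-x w.r.t. the cost-based satisfaction function `μ^c`. -/
theorem statement11 {V P : Type} [Fintype V] [DecidableEq V] [Fintype P] [DecidableEq P]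
    (A : V → Finset P) (c : P → ℝ) (b : ℝ)
    (hn : 0 < Fintype.card V) (hc : ∀ p : P, 0 < c p) (hb : 0 < b)
    (W : Finset P) (hW : ABB.costOf c W ≤ b)
    (B : ℝ) (d : V → P → ℝ)
    (hps : ABB.PriceSystem A c W B d) (hBb : b < B) :
    ABB.PJRx A c b (ABB.costOf c) W := by
  obtain ⟨hB, hd01, hC1, hC2, hC3, hC4, hC5⟩ := hps
  rintro N' T ⟨hNne, hTA, hTcost⟩ p hp
  simp only [Finset.mem_sdiff] at hp
  obtain ⟨hpT, hpW⟩ := hp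
  set n : ℝ := (Fintype.card V : ℝ) with hn'
  have hnpos : (0:ℝ) < n := by rw [hn']; exact_mod_cast hn
  set S : Finset P := W ∩ N'.biUnion A with hS
  have hpS : p ∉ S := fun h => hpW (Finset.mem_inter.mp h).1
  -- Step 1: for i ∈ N', total spent equals spending on S
  have hspent : ∀ i ∈ N', ∑ p' : P, d i p' = ∑ p' ∈ S, d i p' := by
    intro i hi
    rw [← Finset.sum_subset (Finset.subset_univ S)]
    intro x _ hxS
    by_contra h
    have hpos : 0 < d i x := lt_of_le_of_ne (hd01 i x).1 (Ne.symm h)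
    exact hxS (Finset.mem_inter.mpr ⟨hC2 i x hpos,
      Finset.mem_biUnion.mpr ⟨i, hi, hC1 i x hpos⟩⟩)
  -- Step 2: total spending of N' is at most cost of S
  have hspend_le : ∑ i ∈ N', ∑ p' ∈ S, d i p' ≤ ABB.costOf c S := by
    rw [Finset.sum_comm]
    unfold ABB.costOf
    apply Finset.sum_le_sum
    intro q hq
    rw [← hC4 q (Finset.mem_inter.mp hq).1]
    exact Finset.sum_le_sum_of_subset_of_nonneg (Finset.subset_univ N')
      (fun i _ _ => (hd01 i q).1)
  -- Step 3: C5 gives the bound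
  have hN'app : N' ⊆ ABB.approvers A p := by
    intro i hi
    exact Finset.mem_filter.mpr ⟨Finset.mem_univ i, hTA i hi (hpT)⟩
  have hsub : ∑ i ∈ N', (B / n - ∑ p' : P, d i p') ≤ c p := by
    refine le_trans ?_ (hC5 p hpW)
    exact Finset.sum_le_sum_of_subset_of_nonneg hN'app
      (fun i _ _ => sub_nonneg.mpr (hC3 i))
  have key : (N'.card : ℝ) * (B / n) ≤ c p + ABB.costOf c S := by
    have h1 : ∑ i ∈ N', (B / n - ∑ p' : P, d i p')
        = (N'.card : ℝ) * (B / n) - ∑ i ∈ N', ∑ p' ∈ S, d i p' := by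
      rw [Finset.sum_sub_distrib, Finset.sum_const, nsmul_eq_mul]
      congr 1
      exact Finset.sum_congr rfl hspent
    rw [h1] at hsub
    linarith
  -- Conclusion
  have hcard : (0:ℝ) < (N'.card : ℝ) := by
    exact_mod_cast Finset.card_pos.mpr hNne
  have hlt : ABB.costOf c T < (N'.card : ℝ) * (B / n) := by
    calc ABB.costOf c T ≤ ((N'.card : ℝ) / n) * b := hTcost
      _ < ((N'.card : ℝ) / n) * B := by
          apply mul_lt_mul_of_pos_left hBb (div_pos hcard hnpos)
      _ = (N'.card : ℝ) * (B / n) := by ring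
  have : ABB.costOf c (insert p S) = c p + ABB.costOf c S := by
    unfold ABB.costOf
    exact Finset.sum_insert hpS
  rw [this]
  linarith
end

section
/- Let W be an outcome of an ABB instance that admits a price system (B, d) satisfying condition C6 and with B > b. Then W satisfies PJR-x with respect to every DNS satisfaction function μ. -/
open Finset

/-- If an outcome `W` admits a price system `(B, d)` satisfying C6 and
with `B > b`, then `W` satisfies PJR-x w.r.t. every DNS satisfaction function `μ`. -/
theorem statement12 {V P : Type} [Fintype V] [DecidableEq V] [Fintype P] [DecidableEq P]
    (A : V → Finset P) (c : P → ℝ) (b : ℝ)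
    (hn : 0 < Fintype.card V) (hc : ∀ p : P, 0 < c p) (hb : 0 < b)
    (W : Finset P) (hW : ABB.costOf c W ≤ b)
    (B : ℝ) (d : V → P → ℝ)
    (hps : ABB.PriceSystem A c W B d) (hC6 : ABB.C6 A c W d) (hBb : b < B) :
    ∀ μ : Finset P → ℝ, ABB.IsSatFun μ → ABB.DNS c μ → ABB.PJRx A c b μ W := by
  
  intro μ hsat hdns N' T hcoh p0 hp0
  obtain ⟨hmono, hzero, hnn⟩ := hsat
  obtain ⟨hadd, hdnsr⟩ := hdns
  obtain ⟨hNne, hTA, hcT⟩ := hcoh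
  obtain ⟨hB, hd01, hC1, hC2, hC3, hC4, hC5⟩ := hps
  simp only [ABB.approvers] at hC5 hC6
  simp only [ABB.costOf] at hcT hW ⊢
  rw [Finset.mem_sdiff] at hp0
  obtain ⟨hp0T, hp0W⟩ := hp0
  set n : ℝ := (Fintype.card V : ℝ) with hn'
  have hnpos : (0:ℝ) < n := by rw [hn']; exact_mod_cast hn
  have hμpos : ∀ p : P, 0 < μ {p} := by
    intro p
    rcases (hnn {p}).lt_or_eq with h | h
    · exact h
    · exfalso; have := (hzero {p}).mp h.symm; simp at this
  set S : Finset P := W ∩ N'.biUnion A with hS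
  obtain ⟨i0, hi0⟩ := hNne
  have hTbi : T ⊆ N'.biUnion A := fun q hq => Finset.mem_biUnion.mpr ⟨i0, hi0, hTA i0 hi0 hq⟩
  have hp0TW : p0 ∈ T \ W := Finset.mem_sdiff.mpr ⟨hp0T, hp0W⟩
  obtain ⟨q0, hq0mem, hq0min⟩ := (T \ W).exists_min_image c ⟨p0, hp0TW⟩
  have hq0T : q0 ∈ T := (Finset.mem_sdiff.mp hq0mem).1
  have hq0W : q0 ∉ W := (Finset.mem_sdiff.mp hq0mem).2
  set x : P → ℝ := fun p' => ∑ i ∈ N', d i p' with hx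
  have hxnn : ∀ p', 0 ≤ x p' := fun p' => Finset.sum_nonneg fun i _ => (hd01 i p').1
  have hxc : ∀ p' ∈ W, x p' ≤ c p' := by
    intro p' hp'
    rw [← hC4 p' hp']
    exact Finset.sum_le_sum_of_subset_of_nonneg (Finset.subset_univ N')
      (fun i _ _ => (hd01 i p').1)
  have hNsub : ∀ q ∈ T, N' ⊆ Finset.univ.filter (fun i => q ∈ A i) := by
    intro q hq i hi
    simp only [Finset.mem_filter, Finset.mem_univ, true_and]
    exact hTA i hi hq
  have hxq0 : ∀ p' ∈ W, x p' ≤ c q0 := by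
    intro p' hp'
    calc x p' ≤ ∑ i ∈ Finset.univ.filter (fun i => q0 ∈ A i), d i p' :=
          Finset.sum_le_sum_of_subset_of_nonneg (hNsub q0 hq0T)
            (fun i _ _ => (hd01 i p').1)
      _ ≤ c q0 := hC6 q0 hq0W p' hp'
  have hxzero : ∀ p' ∉ S, x p' = 0 := by
    intro p' hp'
    refine Finset.sum_eq_zero fun i hi => ?_
    by_contra h
    have hpos : 0 < d i p' := lt_of_le_of_ne (hd01 i p').1 (Ne.symm h)
    exact hp' (Finset.mem_inter.mpr ⟨hC2 i p' hpos,
      Finset.mem_biUnion.mpr ⟨i, hi, hC1 i p' hpos⟩⟩)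
  -- money lower bound on group spending
  have hmoney : ∑ q ∈ T, c q - c p0 < ∑ p' ∈ S, x p' := by
    have h5 : ∑ i ∈ N', (B / n - ∑ p' : P, d i p') ≤ c p0 := by
      calc ∑ i ∈ N', (B / n - ∑ p' : P, d i p')
          ≤ ∑ i ∈ Finset.univ.filter (fun i => p0 ∈ A i), (B / n - ∑ p' : P, d i p') :=
            Finset.sum_le_sum_of_subset_of_nonneg (hNsub p0 hp0T)
              (fun i _ _ => sub_nonneg.mpr (hC3 i))
        _ ≤ c p0 := hC5 p0 hp0W
    rw [Finset.sum_sub_distrib, Finset.sum_const, nsmul_eq_mul] at h5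
    have hswap : ∑ i ∈ N', ∑ p' : P, d i p' = ∑ p' ∈ S, x p' := by
      rw [Finset.sum_comm]
      exact (Finset.sum_subset (Finset.subset_univ S)
        (fun p' _ hp' => hxzero p' hp')).symm
    rw [hswap] at h5
    have hcard : (1:ℝ) ≤ (N'.card : ℝ) := by
      have : 0 < N'.card := Finset.card_pos.mpr ⟨i0, hi0⟩
      exact_mod_cast this
    have hbB : (N'.card : ℝ) / n * b < (N'.card : ℝ) * (B / n) := by
      have h1 : (N'.card : ℝ) / n * b = (N'.card : ℝ) * (b / n) := by ring
      rw [h1]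
      exact mul_lt_mul_of_pos_left ((div_lt_div_iff_of_pos_right hnpos).mpr hBb)
        (by linarith)
    linarith
  -- S ∩ T = T ∩ W
  have hST : S ∩ T = T ∩ W := by
    ext q
    simp only [hS, Finset.mem_inter]
    constructor
    · rintro ⟨⟨hw, _⟩, ht⟩; exact ⟨ht, hw⟩
    · rintro ⟨ht, hw⟩; exact ⟨⟨hw, hTbi ht⟩, ht⟩
  -- spending on S \ T
  have hsplitS : ∑ p' ∈ S ∩ T, x p' + ∑ p' ∈ S \ T, x p' = ∑ p' ∈ S, x p' :=
    Finset.sum_inter_add_sum_sdiff S T x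
  have hcTW : ∑ p' ∈ S ∩ T, x p' ≤ ∑ q ∈ T ∩ W, c q := by
    rw [hST]
    exact Finset.sum_le_sum fun q hq => hxc q (Finset.mem_inter.mp hq).2
  have hsplitT : ∑ q ∈ T ∩ W, c q + ∑ q ∈ T \ W, c q = ∑ q ∈ T, c q :=
    Finset.sum_inter_add_sum_sdiff T W c
  have herase : c p0 + ∑ q ∈ (T \ W).erase p0, c q = ∑ q ∈ T \ W, c q :=
    Finset.add_sum_erase _ c hp0TW
  have hkey : ∑ q ∈ (T \ W).erase p0, c q < ∑ p' ∈ S \ T, x p' := by linarith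
  -- ratio bounds
  have hrat : 0 < μ {q0} / c q0 := div_pos (hμpos q0) (hc q0)
  have hub : ∀ q ∈ (T \ W).erase p0, μ {q} ≤ c q * (μ {q0} / c q0) := by
    intro q hq
    have hq' : q ∈ T \ W := Finset.mem_of_mem_erase hq
    have h := (hdnsr q0 q (hq0min q hq')).2
    calc μ {q} = c q * (μ {q} / c q) := by rw [mul_comm]; exact (div_mul_cancel₀ _ (hc q).ne').symm
      _ ≤ c q * (μ {q0} / c q0) := mul_le_mul_of_nonneg_left h (hc q).le
  have hlb : ∀ p' ∈ S \ T, x p' * (μ {q0} / c q0) ≤ μ {p'} := by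
    intro p' hp'
    have hp'W : p' ∈ W := (Finset.mem_inter.mp (Finset.mem_sdiff.mp hp').1).1
    rcases le_total (c p') (c q0) with h | h
    · have hr := (hdnsr p' q0 h).2
      calc x p' * (μ {q0} / c q0) ≤ x p' * (μ {p'} / c p') :=
            mul_le_mul_of_nonneg_left hr (hxnn p')
        _ ≤ c p' * (μ {p'} / c p') :=
            mul_le_mul_of_nonneg_right (hxc p' hp'W)
              (div_nonneg (hμpos p').le (hc p').le)
        _ = μ {p'} := by rw [mul_comm]; exact div_mul_cancel₀ _ (hc p').ne'
    · have hr := (hdnsr q0 p' h).1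
      calc x p' * (μ {q0} / c q0) ≤ c q0 * (μ {q0} / c q0) :=
            mul_le_mul_of_nonneg_right (hxq0 p' hp'W) hrat.le
        _ = μ {q0} := by rw [mul_comm]; exact div_mul_cancel₀ _ (hc q0).ne'
        _ ≤ μ {p'} := hr
  -- main satisfaction chain
  have hchain : ∑ q ∈ (T \ W).erase p0, μ {q} < ∑ p' ∈ S \ T, μ {p'} := by
    calc ∑ q ∈ (T \ W).erase p0, μ {q}
        ≤ ∑ q ∈ (T \ W).erase p0, c q * (μ {q0} / c q0) := Finset.sum_le_sum hub
      _ = (∑ q ∈ (T \ W).erase p0, c q) * (μ {q0} / c q0) := by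
          rw [Finset.sum_mul]
      _ < (∑ p' ∈ S \ T, x p') * (μ {q0} / c q0) :=
          mul_lt_mul_of_pos_right hkey hrat
      _ = ∑ p' ∈ S \ T, x p' * (μ {q0} / c q0) := by rw [Finset.sum_mul]
      _ ≤ ∑ p' ∈ S \ T, μ {p'} := Finset.sum_le_sum hlb
  -- assemble
  have hp0S : p0 ∉ S := fun h => hp0W (Finset.mem_inter.mp h).1
  have e1 : μ (insert p0 S) = μ {p0} + ∑ p' ∈ S, μ {p'} := by
    rw [hadd, Finset.sum_insert hp0S]
  have e2 : ∑ p' ∈ S ∩ T, μ {p'} + ∑ p' ∈ S \ T, μ {p'} = ∑ p' ∈ S, μ {p'} := by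
    exact Finset.sum_inter_add_sum_sdiff S T _
  have e3 : ∑ q ∈ T ∩ W, μ {q} + ∑ q ∈ T \ W, μ {q} = ∑ q ∈ T, μ {q} :=
    Finset.sum_inter_add_sum_sdiff T W _
  have e4 : μ {p0} + ∑ q ∈ (T \ W).erase p0, μ {q} = ∑ q ∈ T \ W, μ {q} :=
    Finset.add_sum_erase _ (fun q => μ {q}) hp0TW
  have e5 : ∑ p' ∈ S ∩ T, μ {p'} = ∑ q ∈ T ∩ W, μ {q} := by rw [hST]
  rw [hadd T, e1, ← e2, e5, ← e3, ← e4]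
  linarith
end

section
/- Every output W of the Method of Equal Shares MES[μ^#] (i.e., MES run with the cardinality-based satisfaction function) admits a price system (B, d) satisfying conditions C1–C5 and C6 with B > b. -/
open Finset

section Aux

variable {V P : Type} [Fintype V] [DecidableEq V] [Fintype P] [DecidableEq P]

private lemma aux_exists_affordable
    (A : V → Finset P) (c : P → ℝ) (bud : V → ℝ) (p : P)
    (hbud : ∀ i, 0 ≤ bud i) (hcp : 0 < c p) {ρ : ℝ} (hρ : 0 ≤ ρ)
    (h : c p ≤ ∑ i ∈ ABB.approvers A p, min (bud i) ρ) :
    ∃ ρ₁, 0 ≤ ρ₁ ∧ ρ₁ ≤ ρ ∧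
      ABB.Affordable A c (fun S => (S.card : ℝ)) bud p ρ₁ ∧
      (∑ i ∈ ABB.approvers A p, min (bud i) ρ₁) = c p := by
  set f : ℝ → ℝ := fun x => ∑ i ∈ ABB.approvers A p, min (bud i) x with hf
  have hcont : Continuous f := by
    apply continuous_finset_sum
    intro i _
    exact continuous_const.min continuous_id
  have hf0 : f 0 = 0 := by
    refine Finset.sum_eq_zero fun i _ => min_eq_right (hbud i)
  have hmem : c p ∈ Set.Icc (f 0) (f ρ) := ⟨by rw [hf0]; exact hcp.le, h⟩
  obtain ⟨ρ₁, hρ₁mem, hfρ₁⟩ := intermediate_value_Icc hρ hcont.continuousOn hmem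
  refine ⟨ρ₁, hρ₁mem.1, hρ₁mem.2, ?_, hfρ₁⟩
  unfold ABB.Affordable
  simpa using hfρ₁

/-- Key invariant of MES with the cardinality satisfaction function. -/
private lemma aux_mes_invariant
    (A : V → Finset P) (c : P → ℝ) (b0 : ℝ) (hb0 : 0 ≤ b0) (hc : ∀ p : P, 0 < c p)
    {W : Finset P} {bud : V → ℝ}
    (h : ABB.MESReach A c (fun S => (S.card : ℝ)) b0 W bud) :
    ∃ d : V → P → ℝ,
      (∀ i p, 0 ≤ d i p) ∧
      (∀ i p, 0 < d i p → p ∈ A i ∧ p ∈ W) ∧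
      (∀ i, bud i = b0 - ∑ p : P, d i p) ∧
      (∀ i, 0 ≤ bud i) ∧
      (∀ p ∈ W, ∑ i : V, d i p = c p) ∧
      (∀ p ∉ W, ∀ p' ∈ W, ∑ i ∈ ABB.approvers A p, d i p' ≤ c p) := by
  induction h with
  | init =>
      refine ⟨fun _ _ => 0, by simp, by simp, by simp, fun i => hb0, by simp, by simp⟩
  | step hreach hp₀ hρ haff hmin ih =>
      rename_i W bud p₀ ρ
      obtain ⟨d, hd0, hdsupp, hdbud, hbudnn, hdcost, hdC6⟩ := ih
      have hone : ((({p₀} : Finset P).card : ℝ)) = 1 := by simp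
      have haff' : ∑ i ∈ ABB.approvers A p₀, min (bud i) ρ = c p₀ := by
        have := haff
        unfold ABB.Affordable at this
        simpa using this
      -- payments for a project not yet selected are zero
      have hdzero : ∀ i, ∀ q ∉ W, d i q = 0 := fun i q hq => by
        rcases lt_or_eq_of_le (hd0 i q) with hlt | heq
        · exact absurd (hdsupp i q hlt).2 hq
        · exact heq.symm
      -- the key C6-type bound via minimality and IVT
      have hkey : ∀ q, q ∉ W → q ≠ p₀ →
          (∑ i ∈ ABB.approvers A q, min (bud i) ρ) ≤ c q := by
        intro q hqW hqp₀
        by_contra hlt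
        push_neg at hlt
        obtain ⟨ρ₁, h0, h1, haff₁, hval⟩ :=
          aux_exists_affordable A c bud q hbudnn (hc q) hρ hlt.le
        have := hmin q hqW ρ₁ h0 haff₁
        have hρeq : ρ₁ = ρ := le_antisymm h1 this
        rw [hρeq] at hval
        exact absurd hval (ne_of_lt hlt).symm
      set d' : V → P → ℝ := fun i p =>
        d i p + (if p = p₀ then (if p₀ ∈ A i then min (bud i) ρ else 0) else 0) with hd'
      have hmin_nn : ∀ i, 0 ≤ min (bud i) ρ := fun i => le_min (hbudnn i) hρ
      have hsum_d' : ∀ i, ∑ p : P, d' i p =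
          (∑ p : P, d i p) + (if p₀ ∈ A i then min (bud i) ρ else 0) := by
        intro i
        rw [Finset.sum_add_distrib]
        congr 1
        simp [Finset.sum_ite_eq']
      refine ⟨d', ?_, ?_, ?_, ?_, ?_, ?_⟩
      · intro i p
        have : (0:ℝ) ≤ (if p = p₀ then (if p₀ ∈ A i then min (bud i) ρ else 0) else 0) := by
          split <;> [skip; exact le_refl 0]
          split <;> [exact hmin_nn i; exact le_refl 0]
        exact add_nonneg (hd0 i p) this
      · intro i p hpos
        by_cases hp : p = p₀
        · by_cases hAi : p₀ ∈ A i
          · exact ⟨hp ▸ hAi, hp ▸ Finset.mem_insert_self _ _⟩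
          · rw [hp] at hpos ⊢
            simp only [hd', if_neg hAi, ite_self, add_zero] at hpos
            exact ⟨(hdsupp i p₀ hpos).1, Finset.mem_insert_self _ _⟩
        · simp only [hd', if_neg hp, add_zero] at hpos
          exact ⟨(hdsupp i p hpos).1, Finset.mem_insert_of_mem (hdsupp i p hpos).2⟩
      · intro i
        rw [hsum_d']
        by_cases hAi : p₀ ∈ A i
        · simp only [if_pos hAi, hone, mul_one]
          rw [hdbud i]; ring
        · simp only [if_neg hAi, add_zero]
          exact hdbud i
      · intro i
        by_cases hAi : p₀ ∈ A i
        · simp only [if_pos hAi, hone, mul_one]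
          have := min_le_left (bud i) ρ
          linarith
        · simp only [if_neg hAi]
          exact hbudnn i
      · intro p hp
        rcases Finset.mem_insert.mp hp with hp | hp
        · rw [hp]
          have : ∀ i : V, d' i p₀ = (if p₀ ∈ A i then min (bud i) ρ else 0) := by
            intro i
            simp [hd', hdzero i p₀ hp₀]
          rw [Finset.sum_congr rfl (fun i _ => this i)]
          rw [← Finset.sum_filter]
          exact haff'
        · have hpne : p ≠ p₀ := fun h => hp₀ (h ▸ hp)
          have : ∀ i : V, d' i p = d i p := fun i => by simp [hd', hpne]
          rw [Finset.sum_congr rfl (fun i _ => this i)]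
          exact hdcost p hp
      · intro p hpW p' hp'
        have hpWold : p ∉ W := fun h => hpW (Finset.mem_insert_of_mem h)
        have hpne : p ≠ p₀ := fun h => hpW (h ▸ Finset.mem_insert_self _ _)
        rcases Finset.mem_insert.mp hp' with hp' | hp'
        · rw [hp']
          have heq : ∀ i : V, d' i p₀ = (if p₀ ∈ A i then min (bud i) ρ else 0) := by
            intro i
            simp [hd', hdzero i p₀ hp₀]
          calc ∑ i ∈ ABB.approvers A p, d' i p₀
              = ∑ i ∈ ABB.approvers A p, (if p₀ ∈ A i then min (bud i) ρ else 0) :=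
                Finset.sum_congr rfl (fun i _ => heq i)
            _ ≤ ∑ i ∈ ABB.approvers A p, min (bud i) ρ := by
                refine Finset.sum_le_sum fun i _ => ?_
                split
                · exact le_refl _
                · exact hmin_nn i
            _ ≤ c p := hkey p hpWold hpne
        · have hp'ne : p' ≠ p₀ := fun h => hp₀ (h ▸ hp')
          have : ∀ i : V, d' i p' = d i p' := fun i => by simp [hd', hp'ne]
          rw [Finset.sum_congr rfl (fun i _ => this i)]
          exact hdC6 p hpWold p' hp'

end Aux

/-- Every output of MES[μ^#] (MES with the cardinality-based
satisfaction function) admits a price system `(B, d)` with `B > b` satisfying C1–C5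
and C6. -/
theorem statement13 {V P : Type} [Fintype V] [DecidableEq V] [Fintype P] [DecidableEq P]
    (A : V → Finset P) (c : P → ℝ) (b : ℝ)
    (hn : 0 < Fintype.card V) (hc : ∀ p : P, 0 < c p) (hb : 0 < b)
    (W : Finset P) (hW : ABB.MESOutput A c b (fun S => (S.card : ℝ)) W) :
    ∃ (B : ℝ) (d : V → P → ℝ),
      b < B ∧ ABB.PriceSystem A c W B d ∧ ABB.C6 A c W d := by
  classical
  obtain ⟨bud, hreach, hterm⟩ := hW
  set n : ℝ := (Fintype.card V : ℝ) with hn'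
  have hnpos : (0:ℝ) < n := by rw [hn']; exact_mod_cast hn
  have hb0 : (0:ℝ) ≤ b / n := le_of_lt (div_pos hb hnpos)
  obtain ⟨d, hd0, hdsupp, hdbud, hbudnn, hdcost, hdC6⟩ :=
    aux_mes_invariant A c (b / n) hb0 hc hreach
  -- budgets are at most b0
  have hsum_d_nn : ∀ i, 0 ≤ ∑ p : P, d i p := fun i =>
    Finset.sum_nonneg fun p _ => hd0 i p
  have hbudle : ∀ i, bud i ≤ b / n := fun i => by
    have := hsum_d_nn i
    rw [hdbud i]; linarith
  -- terminal condition gives strict slack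
  have hslack : ∀ p ∉ W, ∑ i ∈ ABB.approvers A p, bud i < c p := by
    intro p hp
    by_contra hge
    push_neg at hge
    have heq : ∑ i ∈ ABB.approvers A p, min (bud i) (b / n)
        = ∑ i ∈ ABB.approvers A p, bud i :=
      Finset.sum_congr rfl fun i _ => min_eq_left (hbudle i)
    obtain ⟨ρ₁, h0, _, haff₁, _⟩ :=
      aux_exists_affordable A c bud p hbudnn (hc p) hb0 (heq ▸ hge)
    exact hterm p hp ρ₁ h0 haff₁
  -- pick a uniform slack ε
  have hε : ∃ ε : ℝ, 0 < ε ∧ ∀ p ∉ W, (∑ i ∈ ABB.approvers A p, bud i) + ε ≤ c p := by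
    rcases (Finset.univ.filter (fun p : P => p ∉ W)).eq_empty_or_nonempty with he | hne
    · refine ⟨b, hb, fun p hp => ?_⟩
      exact absurd (Finset.mem_filter.mpr ⟨Finset.mem_univ p, hp⟩) (he ▸ Finset.notMem_empty p)
    · set m := (Finset.univ.filter (fun p : P => p ∉ W)).inf' hne
        (fun p => c p - ∑ i ∈ ABB.approvers A p, bud i) with hm
      have hmpos : 0 < m := by
        rw [hm, Finset.lt_inf'_iff]
        intro p hp
        have := hslack p (Finset.mem_filter.mp hp).2
        linarith
      refine ⟨m, hmpos, fun p hp => ?_⟩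
      have : m ≤ c p - ∑ i ∈ ABB.approvers A p, bud i :=
        Finset.inf'_le _ (Finset.mem_filter.mpr ⟨Finset.mem_univ p, hp⟩)
      linarith
  obtain ⟨ε, hεpos, hεle⟩ := hε
  refine ⟨b + ε, d, by linarith, ?_, ?_⟩
  · have hBn : (b + ε) / n = b / n + ε / n := by ring
    have hεn : 0 < ε / n := div_pos hεpos hnpos
    refine ⟨by linarith, ?_, ?_, ?_, ?_, ?_, ?_⟩
    · intro i p
      refine ⟨hd0 i p, ?_⟩
      have h1 : d i p ≤ ∑ p' : P, d i p' :=
        Finset.single_le_sum (fun p' _ => hd0 i p') (Finset.mem_univ p)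
      have h2 : ∑ p' : P, d i p' ≤ b / n := by
        have := hbudnn i
        rw [hdbud i] at this; linarith
      rw [hBn]; linarith
    · exact fun i p h => (hdsupp i p h).1
    · exact fun i p h => (hdsupp i p h).2
    · intro i
      have h2 : ∑ p' : P, d i p' ≤ b / n := by
        have := hbudnn i
        rw [hdbud i] at this; linarith
      rw [hBn]; linarith
    · exact hdcost
    · intro p hp
      have heq : ∀ i : V, (b + ε) / n - ∑ p' : P, d i p' = bud i + ε / n := by
        intro i
        rw [hdbud i]; ring
      rw [Finset.sum_congr rfl (fun i _ => heq i), Finset.sum_add_distrib,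
        Finset.sum_const, nsmul_eq_mul]
      have hcard : ((ABB.approvers A p).card : ℝ) ≤ n := by
        rw [hn']
        exact_mod_cast Finset.card_le_univ _
      have h3 : ((ABB.approvers A p).card : ℝ) * (ε / n) ≤ ε := by
        have h4 : ((ABB.approvers A p).card : ℝ) * (ε / n) ≤ n * (ε / n) :=
          mul_le_mul_of_nonneg_right hcard (by positivity)
        have h5 : n * (ε / n) = ε := by field_simp
        linarith
      have := hεle p hp
      linarith
  · exact fun p hp p' hp' => hdC6 p hp p' hp'
end

section
/- Every output of the Method of Equal Shares MES[μ^#] (i.e., MES run with the cardinality-based satisfaction function) satisfies PJR-x with respect to every DNS satisfaction function μ. -/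
open Finset

section Aux

variable {V P : Type} [Fintype V] [DecidableEq V] [Fintype P] [DecidableEq P]

lemma reach_nonneg (A : V → Finset P) (c : P → ℝ) (μ : Finset P → ℝ) {b0 : ℝ}
    (hb0 : 0 ≤ b0) {W : Finset P} {bud : V → ℝ}
    (h : ABB.MESReach A c μ b0 W bud) : ∀ i, 0 ≤ bud i := by
  induction h with
  | init => intro i; exact hb0
  | step _ _ _ _ _ ih =>
    intro i
    dsimp only
    split
    · exact sub_nonneg.mpr (min_le_left _ _)
    · exact ih i

lemma afford_of_budget (A : V → Finset P) (c : P → ℝ) (bud : V → ℝ)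
    (hb : ∀ i, 0 ≤ bud i) (p : P) (hcp : 0 < c p)
    (h : c p ≤ ∑ i ∈ ABB.approvers A p, bud i) :
    ∃ ρ : ℝ, 0 ≤ ρ ∧ ABB.Affordable A c (fun S => (S.card : ℝ)) bud p ρ := by
  set f : ℝ → ℝ := fun ρ => ∑ i ∈ ABB.approvers A p, min (bud i) ρ with hf_def
  set M : ℝ := ∑ i ∈ ABB.approvers A p, bud i with hM_def
  have hMnn : 0 ≤ M := Finset.sum_nonneg fun i _ => hb i
  have hf0 : f 0 = 0 := by
    simp only [hf_def]
    exact Finset.sum_eq_zero fun i _ => min_eq_right (hb i)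
  have hfM : f M = M := by
    simp only [hf_def, hM_def]
    refine Finset.sum_congr rfl fun i hi => min_eq_left ?_
    exact Finset.single_le_sum (fun j _ => hb j) hi
  have hcont : Continuous f := by
    apply continuous_finset_sum
    intro i _
    exact continuous_const.min continuous_id
  have hIVT := intermediate_value_Icc hMnn hcont.continuousOn
  have hmem : c p ∈ Set.Icc (f 0) (f M) := by
    rw [hf0, hfM]; exact ⟨hcp.le, h⟩
  obtain ⟨ρ, hρmem, hρ⟩ := hIVT hmem
  refine ⟨ρ, hρmem.1, ?_⟩
  unfold ABB.Affordable
  simpa [f] using hρ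

end Aux
/-- Every output of MES[μ^#] (MES with the cardinality-based
satisfaction function) satisfies PJR-x w.r.t. every DNS satisfaction function `μ`. -/
theorem statement14 {V P : Type} [Fintype V] [DecidableEq V] [Fintype P] [DecidableEq P]
    (A : V → Finset P) (c : P → ℝ) (b : ℝ)
    (hn : 0 < Fintype.card V) (hc : ∀ p : P, 0 < c p) (hb : 0 < b)
    (W : Finset P) (hW : ABB.MESOutput A c b (fun S => (S.card : ℝ)) W) :
    ∀ μ : Finset P → ℝ, ABB.IsSatFun μ → ABB.DNS c μ → ABB.PJRx A c b μ W := by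
  intro μ hsat hdns N' T hcoh p hpTW
  by_contra hcon0
  push_neg at hcon0
  obtain ⟨budF, hreach, hterm⟩ := hW
  obtain ⟨hN'ne, hTA, hTcost⟩ := hcoh
  obtain ⟨hadd, hdns2⟩ := hdns
  obtain ⟨hmono, hzero, hnonneg⟩ := hsat
  have hnpos : (0:ℝ) < (Fintype.card V : ℝ) := by exact_mod_cast hn
  set b0 : ℝ := b / (Fintype.card V : ℝ) with hb0_def
  have hb0 : 0 ≤ b0 := by positivity
  have hpT : p ∈ T := (Finset.mem_sdiff.1 hpTW).1
  have hpW : p ∉ W := (Finset.mem_sdiff.1 hpTW).2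
  have hgpos : ∀ q : P, 0 < μ {q} := by
    intro q
    rcases lt_or_eq_of_le (hnonneg {q}) with h | h
    · exact h
    · exact absurd ((hzero {q}).1 h.symm) (Finset.singleton_ne_empty q)
  set S : Finset P := W ∩ N'.biUnion A with hS_def
  have hpS : p ∉ S := fun h => hpW (Finset.mem_inter.1 h).1
  obtain ⟨i0, hi0⟩ := hN'ne
  have hTsub : T ⊆ N'.biUnion A := fun t ht =>
    Finset.mem_biUnion.2 ⟨i0, hi0, hTA i0 hi0 ht⟩
  have hST : S ∩ T = T ∩ W := by
    ext q
    simp only [hS_def, Finset.mem_inter]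
    constructor
    · rintro ⟨⟨h1, h2⟩, h3⟩; exact ⟨h3, h1⟩
    · rintro ⟨h3, h1⟩; exact ⟨⟨h1, hTsub h3⟩, h3⟩
  -- the contradiction hypothesis in additive form
  have hcon : μ {p} + ∑ q ∈ S, μ {q} ≤ ∑ t ∈ T, μ {t} := by
    have h1 := hadd (insert p S)
    rw [Finset.sum_insert hpS] at h1
    have h2 := hadd T
    calc μ {p} + ∑ q ∈ S, μ {q} = μ (insert p S) := h1.symm
      _ ≤ μ T := hcon0
      _ = ∑ t ∈ T, μ {t} := h2
  have hcon2 : ∑ q ∈ S \ T, μ {q} ≤ ∑ t ∈ (T \ W).erase p, μ {t} := by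
    have e1 : ∑ q ∈ S ∩ T, μ {q} + ∑ q ∈ S \ T, μ {q} = ∑ q ∈ S, μ {q} :=
      Finset.sum_inter_add_sum_sdiff S T (fun q => μ {q})
    have e2 : ∑ t ∈ T ∩ W, μ {t} + ∑ t ∈ T \ W, μ {t} = ∑ t ∈ T, μ {t} :=
      Finset.sum_inter_add_sum_sdiff T W (fun q => μ {q})
    have e3 : μ {p} + ∑ t ∈ (T \ W).erase p, μ {t} = ∑ t ∈ T \ W, μ {t} :=
      Finset.add_sum_erase _ (fun t => μ {t}) hpTW
    have e4 : ∑ q ∈ S ∩ T, μ {q} = ∑ t ∈ T ∩ W, μ {t} := by rw [hST]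
    linarith
  set R : Finset P := T \ W with hR_def
  obtain ⟨tm, htmR, htm⟩ := Finset.exists_min_image R c ⟨p, hpTW⟩
  set m : ℝ := c tm with hm_def
  set K : ℝ := ∑ t ∈ R.erase p, c t with hK_def
  have hcRK : ∑ t ∈ R, c t = c p + K := (Finset.add_sum_erase _ _ hpTW).symm
  have hmlecp : m ≤ c p := htm p hpTW
  have hminnn : ∀ q : P, 0 ≤ min (c q) m := fun q => le_min (hc q).le (hc tm).le
  -- Claim B
  have hDK : ∑ q ∈ S \ T, min (c q) m ≤ K := by
    by_cases hE : (R.erase p).Nonempty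
    · obtain ⟨t0, ht0, ht0min⟩ := Finset.exists_min_image (R.erase p) (fun t => c t / μ {t}) hE
      have claimA : ∀ q : P, min (c q) m * μ {t0} ≤ c t0 * μ {q} := by
        intro q
        rcases le_total (c q) (c t0) with h1 | h1
        · have hr := (hdns2 q t0 h1).2
          rw [div_le_div_iff₀ (hc t0) (hc q)] at hr
          have h3 : min (c q) m * μ {t0} ≤ c q * μ {t0} :=
            mul_le_mul_of_nonneg_right (min_le_left _ _) (hgpos t0).le
          nlinarith
        · have hμ := (hdns2 t0 q h1).1
          have hm' : min (c q) m ≤ c t0 :=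
            le_trans (min_le_right _ _) (htm t0 (Finset.mem_of_mem_erase ht0))
          exact mul_le_mul hm' hμ (hgpos t0).le (hc t0).le
      calc ∑ q ∈ S \ T, min (c q) m
          ≤ ∑ q ∈ S \ T, (c t0 / μ {t0}) * μ {q} := by
            refine Finset.sum_le_sum fun q _ => ?_
            rw [div_mul_eq_mul_div, le_div_iff₀ (hgpos t0)]
            exact claimA q
        _ = (c t0 / μ {t0}) * ∑ q ∈ S \ T, μ {q} := by rw [Finset.mul_sum]
        _ ≤ (c t0 / μ {t0}) * ∑ t ∈ R.erase p, μ {t} := by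
            exact mul_le_mul_of_nonneg_left hcon2 (div_nonneg (hc t0).le (hgpos t0).le)
        _ = ∑ t ∈ R.erase p, (c t0 / μ {t0}) * μ {t} := by rw [Finset.mul_sum]
        _ ≤ ∑ t ∈ R.erase p, (c t / μ {t}) * μ {t} :=
            Finset.sum_le_sum fun t ht => mul_le_mul_of_nonneg_right (ht0min t ht) (hgpos t).le
        _ = K := Finset.sum_congr rfl fun t _ => div_mul_cancel₀ _ (hgpos t).ne'
    · have hEe : R.erase p = ∅ := Finset.not_nonempty_iff_eq_empty.1 hE
      rw [hEe] at hcon2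
      simp only [Finset.sum_empty] at hcon2
      have hSTe : S \ T = ∅ := by
        by_contra hne
        have hpos : 0 < ∑ q ∈ S \ T, μ {q} :=
          Finset.sum_pos (fun q _ => hgpos q) (Finset.nonempty_of_ne_empty hne)
        linarith
      rw [hSTe, hK_def, hEe]
      simp
  set D : Finset P → ℝ := fun U => ∑ q ∈ (U ∩ N'.biUnion A) \ T, min (c q) m with hD_def
  have hDle : ∀ U, U ⊆ W → D U ≤ K := by
    intro U hU
    refine le_trans (Finset.sum_le_sum_of_subset_of_nonneg ?_ fun q _ _ => hminnn q) hDK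
    intro q hq
    rw [hS_def]
    rw [Finset.mem_sdiff, Finset.mem_inter] at hq ⊢
    exact ⟨⟨hU hq.1.1, hq.1.2⟩, hq.2⟩
  have hNb0 : ∑ t ∈ T, c t ≤ (N'.card : ℝ) * b0 := by
    have he : ((N'.card : ℝ) / (Fintype.card V : ℝ)) * b = (N'.card : ℝ) * b0 := by
      rw [hb0_def]; ring
    have := hTcost
    unfold ABB.costOf at this
    linarith
  have hN'app : ∀ t ∈ T, N' ⊆ ABB.approvers A t := by
    intro t ht i hi
    unfold ABB.approvers
    exact Finset.mem_filter.2 ⟨Finset.mem_univ i, hTA i hi ht⟩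
  -- key invariant
  have key : ∀ U bud, ABB.MESReach A c (fun S => (S.card : ℝ)) b0 U bud → U ⊆ W →
      (N'.card : ℝ) * b0 ≤ (∑ i ∈ N', bud i) + (∑ t ∈ T ∩ U, c t) + D U := by
    intro U bud h
    induction h with
    | init =>
      intro _
      simp only [Finset.inter_empty, Finset.sum_empty, Finset.empty_inter, Finset.sum_const,
        nsmul_eq_mul, hD_def]
      simp
    | @step U bud p' ρ hre hpU hρnn haff hmin ih =>
      intro hsub
      have hUW : U ⊆ W := (Finset.subset_insert p' U).trans hsub
      have hIH := ih hUW
      have hbud : ∀ i, 0 ≤ bud i := reach_nonneg A c _ hb0 hre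
      simp only [Finset.card_singleton, Nat.cast_one, mul_one]
      have haffc : ∑ i ∈ ABB.approvers A p', min (bud i) ρ = c p' := by
        have h := haff
        unfold ABB.Affordable at h
        simpa using h
      set F : Finset V := N'.filter (fun i => p' ∈ A i) with hF_def
      set y : ℝ := ∑ i ∈ F, min (bud i) ρ with hy_def
      have hsum' : ∑ i ∈ N', (if p' ∈ A i then bud i - min (bud i) ρ else bud i)
          = ∑ i ∈ N', bud i - y := by
        have hcg : ∀ i ∈ N', (if p' ∈ A i then bud i - min (bud i) ρ else bud i)
            = bud i - (if p' ∈ A i then min (bud i) ρ else 0) := by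
          intro i _; split <;> simp
        rw [Finset.sum_congr rfl hcg, Finset.sum_sub_distrib, hy_def, hF_def, Finset.sum_filter]
      have hynn : 0 ≤ y := Finset.sum_nonneg fun i _ => le_min (hbud i) hρnn
      have hFsub : F ⊆ ABB.approvers A p' := by
        intro i hi
        unfold ABB.approvers
        exact Finset.mem_filter.2 ⟨Finset.mem_univ i, (Finset.mem_filter.1 hi).2⟩
      have hyc : y ≤ c p' := by
        calc y ≤ ∑ i ∈ ABB.approvers A p', min (bud i) ρ :=
              Finset.sum_le_sum_of_subset_of_nonneg hFsub
                (fun i _ _ => le_min (hbud i) hρnn)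
          _ = c p' := haffc
      -- group budget at U is at least c p
      have hbudsum : c p ≤ ∑ i ∈ N', bud i := by
        have h1 : ∑ t ∈ T ∩ U, c t + ∑ t ∈ T \ U, c t = ∑ t ∈ T, c t :=
          Finset.sum_inter_add_sum_sdiff T U c
        have h2 : ∑ t ∈ R, c t ≤ ∑ t ∈ T \ U, c t := by
          refine Finset.sum_le_sum_of_subset_of_nonneg ?_ (fun t _ _ => (hc t).le)
          exact Finset.sdiff_subset_sdiff (Finset.Subset.refl T) hUW
        have h3 : D U ≤ K := hDle U hUW
        linarith
      have htmT : tm ∈ T := (Finset.mem_sdiff.1 htmR).1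
      have hbudtm : c tm ≤ ∑ i ∈ ABB.approvers A tm, bud i := by
        have h4 : ∑ i ∈ N', bud i ≤ ∑ i ∈ ABB.approvers A tm, bud i :=
          Finset.sum_le_sum_of_subset_of_nonneg (hN'app tm htmT) (fun i _ _ => hbud i)
        linarith
      have htmU : tm ∉ U := fun h => (Finset.mem_sdiff.1 htmR).2 (hUW h)
      obtain ⟨ρ', hρ'nn, haff'⟩ := afford_of_budget A c bud hbud tm (hc tm) hbudtm
      have hρρ' : ρ ≤ ρ' := hmin tm htmU ρ' hρ'nn haff'
      have haff'' : ∑ i ∈ ABB.approvers A tm, min (bud i) ρ' = c tm := by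
        have := haff'
        unfold ABB.Affordable at this
        simpa using this
      have hym : y ≤ m := by
        calc y ≤ ∑ i ∈ F, min (bud i) ρ' :=
              Finset.sum_le_sum fun i _ => min_le_min le_rfl hρρ'
          _ ≤ ∑ i ∈ ABB.approvers A tm, min (bud i) ρ' := by
              refine Finset.sum_le_sum_of_subset_of_nonneg ?_
                (fun i _ _ => le_min (hbud i) hρ'nn)
              exact fun i hi => hN'app tm htmT (Finset.mem_filter.1 hi).1
          _ = c tm := haff''
      rw [hsum']
      by_cases hp'T : p' ∈ T
      · have hTins : T ∩ insert p' U = insert p' (T ∩ U) := by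
          ext q
          simp only [Finset.mem_inter, Finset.mem_insert]
          constructor
          · rintro ⟨h1, h2 | h2⟩
            · exact Or.inl h2
            · exact Or.inr ⟨h1, h2⟩
          · rintro (h1 | ⟨h1, h2⟩)
            · exact ⟨h1 ▸ hp'T, Or.inl h1⟩
            · exact ⟨h1, Or.inr h2⟩
        have hp'TU : p' ∉ T ∩ U := fun h => hpU (Finset.mem_inter.1 h).2
        have hcostins : ∑ t ∈ T ∩ insert p' U, c t = c p' + ∑ t ∈ T ∩ U, c t := by
          rw [hTins, Finset.sum_insert hp'TU]
        have hDins : D (insert p' U) = D U := by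
          simp only [hD_def]
          congr 1
          ext q
          simp only [Finset.mem_sdiff, Finset.mem_inter, Finset.mem_insert]
          constructor
          · rintro ⟨⟨h1 | h1, h2⟩, h3⟩
            · exact absurd (h1 ▸ hp'T) h3
            · exact ⟨⟨h1, h2⟩, h3⟩
          · rintro ⟨⟨h1, h2⟩, h3⟩
            exact ⟨⟨Or.inr h1, h2⟩, h3⟩
        rw [hcostins, hDins]
        linarith
      · have hTins : T ∩ insert p' U = T ∩ U := by
          ext q
          simp only [Finset.mem_inter, Finset.mem_insert]
          constructor
          · rintro ⟨h1, h2 | h2⟩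
            · exact absurd (h2 ▸ h1) hp'T
            · exact ⟨h1, h2⟩
          · rintro ⟨h1, h2⟩
            exact ⟨h1, Or.inr h2⟩
        rw [hTins]
        by_cases hp'B : p' ∈ N'.biUnion A
        · have hp'old : p' ∉ (U ∩ N'.biUnion A) \ T := fun h =>
            hpU (Finset.mem_inter.1 (Finset.mem_sdiff.1 h).1).1
          have hDins : D (insert p' U) = min (c p') m + D U := by
            simp only [hD_def]
            have hseteq : (insert p' U ∩ N'.biUnion A) \ T
                = insert p' ((U ∩ N'.biUnion A) \ T) := by
              ext q
              simp only [Finset.mem_sdiff, Finset.mem_inter, Finset.mem_insert]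
              constructor
              · rintro ⟨⟨h1 | h1, h2⟩, h3⟩
                · exact Or.inl h1
                · exact Or.inr ⟨⟨h1, h2⟩, h3⟩
              · rintro (h1 | ⟨⟨h1, h2⟩, h3⟩)
                · exact ⟨⟨Or.inl h1, h1 ▸ hp'B⟩, h1 ▸ hp'T⟩
                · exact ⟨⟨Or.inr h1, h2⟩, h3⟩
            rw [hseteq, Finset.sum_insert hp'old]
          have hymin : y ≤ min (c p') m := le_min hyc hym
          rw [hDins]
          linarith
        · have hF0 : F = ∅ := by
            rw [hF_def]
            refine Finset.filter_eq_empty_iff.2 fun i hi hA => ?_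
            exact hp'B (Finset.mem_biUnion.2 ⟨i, hi, hA⟩)
          have hy0 : y = 0 := by rw [hy_def, hF0, Finset.sum_empty]
          have hDins : D (insert p' U) = D U := by
            simp only [hD_def]
            congr 1
            ext q
            simp only [Finset.mem_sdiff, Finset.mem_inter, Finset.mem_insert]
            constructor
            · rintro ⟨⟨h1 | h1, h2⟩, h3⟩
              · exact absurd (h1 ▸ h2) hp'B
              · exact ⟨⟨h1, h2⟩, h3⟩
            · rintro ⟨⟨h1, h2⟩, h3⟩
              exact ⟨⟨Or.inr h1, h2⟩, h3⟩
          rw [hDins]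
          linarith
  -- conclude
  have hfinal := key W budF hreach (Finset.Subset.refl W)
  have hDW : D W ≤ K := hDle W (Finset.Subset.refl W)
  have h1 : ∑ t ∈ T ∩ W, c t + ∑ t ∈ T \ W, c t = ∑ t ∈ T, c t :=
    Finset.sum_inter_add_sum_sdiff T W c
  have hb2 : c p ≤ ∑ i ∈ N', budF i := by linarith
  have hbF : ∀ i, 0 ≤ budF i := reach_nonneg A c _ hb0 hreach
  have hb3 : c p ≤ ∑ i ∈ ABB.approvers A p, budF i := by
    have := Finset.sum_le_sum_of_subset_of_nonneg (hN'app p hpT) (fun i _ _ => hbF i)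
    linarith
  obtain ⟨ρ, hρ, haff⟩ := afford_of_budget A c budF hbF p (hc p) hb3
  exact hterm p hpW ρ hρ haff
end
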